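/- arXiv:1803.09416 — 4 statements merged into one kernel-verified Lean document; each statement's English description precedes it below -/
import Mathlib

section
/- Let k ≥ 3, let B1, B2, B3 be three pairwise vertex-disjoint complete graphs on k vertices each, and for each i let x_i, y_i, z_i be three distinct vertices of B_i. Let G be the simple graph obtained from the disjoint union of B1, B2, B3 by adding the six edges x_i x_j and y_i y_j for 1 ≤ i < j ≤ 3. Then G is claw-free and 2-connected, G is not hamiltonian, the six vertices x1, x2, x3, z1, z2, z3 induce a net in G whose endvertices are z1, z2, z3, and each z_i has degree k - 1 = (|V(G)| - 3)/3 in G. -/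
open SimpleGraph

/-- The net: vertices 0,1,2 form a triangle, and 3,4,5 are pendant vertices
attached to 0,1,2 respectively.  Its endvertices are 3,4,5. -/
def netGraph : SimpleGraph (Fin 6) :=
  SimpleGraph.fromEdgeSet {s(0, 1), s(1, 2), s(0, 2), s(0, 3), s(1, 4), s(2, 5)}

/-- `f` is an induced copy of `G'` in `G`: an injective map which preserves and
reflects adjacency. -/
def IsInducedCopy {W V : Type*} (G' : SimpleGraph W) (G : SimpleGraph V) (f : W → V) : Prop :=
  Function.Injective f ∧ ∀ a b : W, G'.Adj a b ↔ G.Adj (f a) (f b)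

/-- A graph is claw-free if it has no induced subgraph isomorphic to `K_{1,3}`. -/
def ClawFree {V : Type*} (G : SimpleGraph V) : Prop :=
  ¬ ∃ f : (Fin 1 ⊕ Fin 3) → V, IsInducedCopy (completeBipartiteGraph (Fin 1) (Fin 3)) G f

/-- A graph is 2-connected if it has at least 3 vertices and deleting any single
vertex leaves a connected graph. -/
def TwoConnected {V : Type*} [Fintype V] (G : SimpleGraph V) : Prop :=
  3 ≤ Fintype.card V ∧ ∀ v : V, (G.induce {w | w ≠ v}).Connected

/-- The sharpness example: three disjoint complete graphs `B_1, B_2, B_3` on `k`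
vertices each (block `i` is `{i} × Fin k`), together with the six edges
`x_i x_j`, `y_i y_j` for `1 ≤ i < j ≤ 3`, where `x i` and `y i` are the
designated vertices of block `i`. -/
def sharpGraph (k : ℕ) (x y : Fin 3 → Fin k) : SimpleGraph (Fin 3 × Fin k) :=
  SimpleGraph.fromRel (fun u v =>
    u.1 = v.1 ∨ (u.2 = x u.1 ∧ v.2 = x v.1) ∨ (u.2 = y u.1 ∧ v.2 = y v.1))


open SimpleGraph Finset

open Fin.NatCast in
lemma ham_perm {V : Type*} [DecidableEq V] {G : SimpleGraph V} {a : V} {p : G.Walk a a}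
    (hp : p.IsHamiltonianCycle) :
    ∃ σ : Equiv.Perm V, (∀ u, G.Adj u (σ u)) ∧ ∀ u w : V, ∃ n : ℕ, σ^[n] u = w := by
  classical
  set l : List V := p.support.tail with hl
  have hcount : ∀ v : V, l.count v = 1 := by
    intro v
    have := hp.isHamiltonian_tail v
    rwa [SimpleGraph.Walk.support_tail_of_not_nil p hp.1.not_nil] at this
  have hnd : l.Nodup := List.nodup_iff_count_le_one.2 fun v => (hcount v).le
  have hmem : ∀ v : V, v ∈ l := fun v => List.count_pos_iff.1 (by rw [hcount v]; norm_num)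
  set n := l.length with hn
  have hnpos : 0 < n := List.length_pos_iff.2 (List.ne_nil_of_mem (hmem a))
  haveI : NeZero n := ⟨hnpos.ne'⟩
  set e : Fin n ≃ V := hnd.getEquivOfForallMemList l hmem with he
  have hegete : ∀ i : Fin n, e i = l.get i := fun i => rfl
  have hsupp : p.support = a :: l := by
    rw [hl]; exact (SimpleGraph.Walk.support_eq_cons p)
  have hchain : List.Chain' G.Adj (a :: l) := by
    rw [← hsupp]; exact SimpleGraph.Walk.isChain_adj_support p
  have hchain' := List.isChain_iff_getElem.1 hchain
  have hne' : l ≠ [] := List.ne_nil_of_mem (hmem a)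
  have hlast : l.get ⟨n - 1, by omega⟩ = a := by
    have hne : p.support ≠ [] := by rw [hsupp]; simp
    have h1 : p.support.getLast? = some a := by
      rw [List.getLast?_eq_getLast hne, SimpleGraph.Walk.getLast_support]
    rw [hsupp] at h1
    have h3 : (a :: l).getLast (by simp) = a := by
      have := List.getLast?_eq_getLast (l := a :: l) (by simp)
      rw [this] at h1
      exact Option.some_injective _ h1
    rw [List.getLast_cons hne'] at h3
    rw [List.getLast_eq_getElem] at h3; exact h3
  have key : ∀ j : Fin n, G.Adj (e j) (e (j + 1)) := by
    intro j
    rcases lt_or_ge (j.val + 1) n with hj | hj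
    · have hadd : (j + 1 : Fin n) = ⟨j.val + 1, hj⟩ := by
        apply Fin.ext
        rw [Fin.add_def]
        have h1 : (1 : Fin n).val = 1 % n := Fin.val_one' n
        rw [h1]
        have hn2 : 2 ≤ n := by omega
        rw [Nat.one_mod_eq_one.2 (by omega)]
        exact Nat.mod_eq_of_lt hj
      rw [hegete, hegete, hadd]
      have := hchain' (j.val + 1) (by simp; omega)
      simp only [List.getElem_cons_succ] at this
      exact this
    · have hjv : j.val = n - 1 := by have := j.isLt; omega
      have hadd : (j + 1 : Fin n) = ⟨0, hnpos⟩ := by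
        apply Fin.ext
        rw [Fin.add_def]
        have h1 : (1 : Fin n).val = 1 % n := Fin.val_one' n
        rw [h1]
        simp only [hjv]
        rcases eq_or_lt_of_le (show 1 ≤ n by omega) with h | h
        · simp [← h]
        · rw [Nat.one_mod_eq_one.2 (by omega), Nat.sub_add_cancel hnpos, Nat.mod_self]
      rw [hegete, hegete, hadd]
      have hje : j = ⟨n - 1, by omega⟩ := Fin.ext hjv
      rw [hje, hlast]
      have := hchain' 0 (by simp; omega)
      simp only [List.getElem_cons_succ] at this
      exact this
  refine ⟨(e.symm.trans (Equiv.addRight (1 : Fin n))).trans e, ?_, ?_⟩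
  · intro u
    have : (e.symm.trans (Equiv.addRight (1 : Fin n))).trans e u = e (e.symm u + 1) := rfl
    rw [this]
    have := key (e.symm u)
    rwa [e.apply_symm_apply] at this
  · intro u w
    set σ := (e.symm.trans (Equiv.addRight (1 : Fin n))).trans e with hσ
    have hiter : ∀ (m : ℕ) (v : V), σ^[m] v = e (e.symm v + (m : Fin n)) := by
      intro m
      induction m with
      | zero => intro v; simp
      | succ m ih =>
        intro v
        rw [Function.iterate_succ_apply', ih v]
        show e (e.symm (e (e.symm v + (m : Fin n))) + 1) = _
        rw [e.symm_apply_apply]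
        congr 1
        push_cast
        rw [add_assoc]
    refine ⟨(e.symm w - e.symm u).val, ?_⟩
    rw [hiter, Fin.cast_val_eq_self, add_comm, sub_add_cancel, e.apply_symm_apply]

lemma perm_cut_card {V : Type*} [Fintype V] [DecidableEq V] (σ : Equiv.Perm V)
    (P : V → Prop) [DecidablePred P] :
    (univ.filter fun u => P u ∧ ¬ P (σ u)).card
      = (univ.filter fun u => P u ∧ ¬ P (σ.symm u)).card := by
  have hA : (univ.filter fun u => P u ∧ ¬ P (σ.symm u)).card
      = (univ.filter fun u => ¬ P u ∧ P (σ u)).card := by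
    apply Finset.card_equiv σ.symm
    intro u
    simp only [mem_filter, mem_univ, true_and, Equiv.apply_symm_apply]
    tauto
  have hD : (univ.filter fun u => P (σ u)).card = (univ.filter fun u => P u).card := by
    apply Finset.card_equiv σ
    intro u
    simp
  have hB : (univ.filter fun u => P (σ u) ∧ P u).card
      + (univ.filter fun u => P (σ u) ∧ ¬ P u).card = (univ.filter fun u => P (σ u)).card := by
    rw [← Finset.filter_filter, ← Finset.filter_filter]
    exact Finset.card_filter_add_card_filter_not _
  have hC : (univ.filter fun u => P u ∧ P (σ u)).card
      + (univ.filter fun u => P u ∧ ¬ P (σ u)).card = (univ.filter fun u => P u).card := by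
    rw [← Finset.filter_filter, ← Finset.filter_filter]
    exact Finset.card_filter_add_card_filter_not _
  have e1 : (univ.filter fun u => P (σ u) ∧ P u).card
      = (univ.filter fun u => P u ∧ P (σ u)).card := by
    congr 1; apply Finset.filter_congr; intro u _; exact and_comm
  have e2 : (univ.filter fun u => P (σ u) ∧ ¬ P u).card
      = (univ.filter fun u => ¬ P u ∧ P (σ u)).card := by
    congr 1; apply Finset.filter_congr; intro u _; exact and_comm
  omega

lemma perm_exists_cross {V : Type*} (σ : Equiv.Perm V)
    (horb : ∀ a b : V, ∃ n : ℕ, σ^[n] a = b) (P : V → Prop)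
    {a b : V} (ha : P a) (hb : ¬ P b) : ∃ u, P u ∧ ¬ P (σ u) := by
  obtain ⟨n, hn⟩ := horb a b
  suffices H : ∀ (n : ℕ) (a : V), P a → σ^[n] a = b → ∃ u, P u ∧ ¬ P (σ u) from
    H n a ha hn
  intro n
  induction n with
  | zero => intro a ha hn; exact absurd (hn ▸ ha) hb
  | succ n ih =>
    intro a ha hn
    by_cases h : P (σ a)
    · exact ih (σ a) h (by rwa [Function.iterate_succ_apply] at hn)
    · exact ⟨a, ha, h⟩

lemma sharp_adj {k : ℕ} {x y : Fin 3 → Fin k} {u v : Fin 3 × Fin k} :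
    (sharpGraph k x y).Adj u v ↔ u ≠ v ∧ (u.1 = v.1 ∨
      (u.2 = x u.1 ∧ v.2 = x v.1) ∨ (u.2 = y u.1 ∧ v.2 = y v.1)) := by
  rw [sharpGraph, SimpleGraph.fromRel_adj]
  constructor
  · rintro ⟨hne, h | h⟩
    · exact ⟨hne, h⟩
    · refine ⟨hne, ?_⟩
      rcases h with h | h | h
      · exact Or.inl h.symm
      · exact Or.inr (Or.inl ⟨h.2, h.1⟩)
      · exact Or.inr (Or.inr ⟨h.2, h.1⟩)
  · rintro ⟨hne, h⟩
    exact ⟨hne, Or.inl h⟩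

lemma sharp_not_ham {k : ℕ} (hk : 3 ≤ k) {x y : Fin 3 → Fin k} (hxy : ∀ i, x i ≠ y i) :
    ¬ (sharpGraph k x y).IsHamiltonian := by
  intro hham
  have hcard : Fintype.card (Fin 3 × Fin k) = 3 * k := by simp
  obtain ⟨a, p, hp⟩ := hham (by omega)
  obtain ⟨σ, hadj, horb⟩ := ham_perm hp
  -- crossing dichotomy (forward)
  have hcross : ∀ u : Fin 3 × Fin k, (σ u).1 ≠ u.1 →
      (u.2 = x u.1 ∧ (σ u).2 = x (σ u).1) ∨ (u.2 = y u.1 ∧ (σ u).2 = y (σ u).1) := by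
    intro u hu
    rcases (sharp_adj.1 (hadj u)).2 with h | h | h
    · exact absurd h.symm hu
    · exact Or.inl h
    · exact Or.inr h
  have hbwd : ∀ u : Fin 3 × Fin k, (σ.symm u).1 ≠ u.1 →
      (u.2 = x u.1 ∧ (σ.symm u).2 = x (σ.symm u).1)
        ∨ (u.2 = y u.1 ∧ (σ.symm u).2 = y (σ.symm u).1) := by
    intro u hu
    have h2 : (σ (σ.symm u)).1 ≠ (σ.symm u).1 := by
      rw [Equiv.apply_symm_apply]; exact fun h => hu h.symm
    rcases hcross (σ.symm u) h2 with h | h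
    · rw [Equiv.apply_symm_apply] at h; exact Or.inl ⟨h.2, h.1⟩
    · rw [Equiv.apply_symm_apply] at h; exact Or.inr ⟨h.2, h.1⟩
  classical
  set d : Fin 3 × Fin k → ℕ := fun u =>
    (if (σ u).1 ≠ u.1 then 1 else 0) + (if (σ.symm u).1 ≠ u.1 then 1 else 0) with hd
  have hdle : ∀ u, d u ≤ 2 := by
    intro u; rw [hd]; dsimp only; split <;> split <;> omega
  have hinterior : ∀ u : Fin 3 × Fin k, u.2 ≠ x u.1 → u.2 ≠ y u.1 → d u = 0 := by
    intro u hx hy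
    have h1 : ¬ ((σ u).1 ≠ u.1) := by
      intro h
      rcases hcross u h with ⟨h', _⟩ | ⟨h', _⟩
      · exact hx h'
      · exact hy h'
    have h2 : ¬ ((σ.symm u).1 ≠ u.1) := by
      intro h
      rcases hbwd u h with ⟨h', _⟩ | ⟨h', _⟩
      · exact hx h'
      · exact hy h'
    rw [hd]; dsimp only; rw [if_neg h1, if_neg h2]
  -- interior vertices exist in each block
  have hint_ex : ∀ i : Fin 3, ∃ w : Fin k, w ≠ x i ∧ w ≠ y i := by
    intro i
    have : ({x i, y i}ᶜ : Finset (Fin k)).Nonempty := by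
      apply Finset.card_pos.1
      rw [Finset.card_compl]
      have : ({x i, y i} : Finset (Fin k)).card ≤ 2 := Finset.card_insert_le _ _ |>.trans (by simp)
      have hkk : Fintype.card (Fin k) = k := by simp
      omega
    obtain ⟨w, hw⟩ := this
    simp only [Finset.mem_compl, Finset.mem_insert, Finset.mem_singleton] at hw
    exact ⟨w, fun h => hw (Or.inl h), fun h => hw (Or.inr h)⟩
  have hne3 : ∀ i : Fin 3, i + 1 ≠ i := by decide
  -- main per-block claim
  have hd1 : ∀ i : Fin 3, d (i, x i) = 1 ∧ d (i, y i) = 1 := by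
    intro i
    have hXY : ((i, x i) : Fin 3 × Fin k) ≠ (i, y i) := by
      intro h; exact hxy i (congrArg Prod.snd h)
    have huint : ∀ u : Fin 3 × Fin k, u.1 = i → u ≠ (i, x i) → u ≠ (i, y i) → d u = 0 := by
      intro u hui hux huy
      apply hinterior
      · intro h; apply hux; rw [← hui]; exact Prod.ext rfl (h.trans (by rw [hui]))
      · intro h; apply huy; rw [← hui]; exact Prod.ext rfl (h.trans (by rw [hui]))
    -- sum over the block
    have hsum : ∑ u ∈ univ.filter (fun u : Fin 3 × Fin k => u.1 = i), d u
        = d (i, x i) + d (i, y i) := by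
      rw [← Finset.sum_pair hXY]
      symm
      apply Finset.sum_subset
      · intro u hu
        simp only [Finset.mem_insert, Finset.mem_singleton] at hu
        simp only [Finset.mem_filter, Finset.mem_univ, true_and]
        rcases hu with rfl | rfl <;> rfl
      · intro u hu hnu
        simp only [Finset.mem_insert, Finset.mem_singleton] at hnu
        push_neg at hnu
        simp only [Finset.mem_filter, Finset.mem_univ, true_and] at hu
        exact huint u hu hnu.1 hnu.2
    -- sum as two filter cards
    have hsum2 : ∑ u ∈ univ.filter (fun u : Fin 3 × Fin k => u.1 = i), d u
        = (univ.filter fun u : Fin 3 × Fin k => u.1 = i ∧ ¬ (σ u).1 = i).card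
          + (univ.filter fun u : Fin 3 × Fin k => u.1 = i ∧ ¬ (σ.symm u).1 = i).card := by
      rw [hd]
      dsimp only
      rw [Finset.sum_add_distrib]
      congr 1
      · rw [Finset.sum_boole, ← Finset.filter_filter]
        apply congrArg Finset.card
        apply Finset.filter_congr
        intro u hu
        simp only [Finset.mem_filter, Finset.mem_univ, true_and] at hu
        rw [hu]
      · rw [Finset.sum_boole, ← Finset.filter_filter]
        apply congrArg Finset.card
        apply Finset.filter_congr
        intro u hu
        simp only [Finset.mem_filter, Finset.mem_univ, true_and] at hu
        rw [hu]
    have hpar := perm_cut_card σ (fun u : Fin 3 × Fin k => u.1 = i)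
    have hO : 1 ≤ (univ.filter fun u : Fin 3 × Fin k => u.1 = i ∧ ¬ (σ u).1 = i).card := by
      obtain ⟨u, hu1, hu2⟩ := perm_exists_cross σ horb (fun u : Fin 3 × Fin k => u.1 = i)
        (a := (i, x i)) (b := (i + 1, x (i + 1))) rfl (hne3 i)
      exact Finset.card_pos.2 ⟨u, by simp [hu1, hu2]⟩
    have heven : d (i, x i) + d (i, y i)
        = 2 * (univ.filter fun u : Fin 3 × Fin k => u.1 = i ∧ ¬ (σ u).1 = i).card := by
      rw [← hsum, hsum2, hpar]; ring
    -- the key exclusion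
    have hkey : ∀ w w' : Fin 3 × Fin k, w.1 = i → w'.1 = i → w ≠ w' →
        (∀ u : Fin 3 × Fin k, u.1 = i → u ≠ w → u ≠ w' → d u = 0) →
        d w = 2 → d w' ≠ 1 → False := by
      intro w w' hw hw' hww' hzero hdw hdw'
      obtain ⟨z', hz1, hz2⟩ := hint_ex i
      have hPz : ((i, z') : Fin 3 × Fin k).1 = i ∧ d (i, z') = 0 :=
        ⟨rfl, hinterior _ hz1 hz2⟩
      have hPw : ¬ (w.1 = i ∧ d w = 0) := by rintro ⟨_, h⟩; omega
      obtain ⟨u, hu, hnu⟩ := perm_exists_cross σ horb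
        (fun u : Fin 3 × Fin k => u.1 = i ∧ d u = 0) hPz hPw
      -- u is in the block with no crossing, σ u fails the predicate
      have hfwd0 : (σ u).1 = u.1 := by
        by_contra h
        have : d u ≠ 0 := by rw [hd]; dsimp only; rw [if_pos h]; omega
        exact this hu.2
      have hσu1 : (σ u).1 = i := hfwd0.trans hu.1
      have hσud : d (σ u) ≠ 0 := fun h => hnu ⟨hσu1, h⟩
      -- σ u has no backward crossing
      have hbwd0 : (σ.symm (σ u)).1 = (σ u).1 := by
        rw [Equiv.symm_apply_apply, hfwd0]
      have hnb : ¬ ((σ.symm (σ u)).1 ≠ (σ u).1) := by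
        rw [hbwd0]; exact fun h => h rfl
      have hdσu : d (σ u) ≤ 1 := by
        rw [hd]; dsimp only
        rw [if_neg hnb]
        split <;> omega
      -- σ u must be w or w'
      have : σ u = w ∨ σ u = w' := by
        by_contra h
        push_neg at h
        exact hσud (hzero _ hσu1 h.1 h.2)
      rcases this with h | h
      · rw [h] at hdσu; omega
      · rw [h] at hdσu hσud; omega
    have hX2 : d (i, x i) ≤ 1 := by
      by_contra h
      push_neg at h
      have hdx : d (i, x i) = 2 := le_antisymm (hdle _) h
      have hdy : d (i, y i) ≠ 1 := by
        intro h1; rw [hdx, h1] at heven; omega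
      exact hkey (i, x i) (i, y i) rfl rfl hXY huint hdx hdy
    have hY2 : d (i, y i) ≤ 1 := by
      by_contra h
      push_neg at h
      have hdy : d (i, y i) = 2 := le_antisymm (hdle _) h
      have hdx : d (i, x i) ≠ 1 := by
        intro h1; rw [hdy, h1] at heven; omega
      exact hkey (i, y i) (i, x i) rfl rfl hXY.symm
        (fun u h1 h2 h3 => huint u h1 h3 h2) hdy hdx
    omega
  -- final parity contradiction on the x-vertices
  set Sx : Finset (Fin 3 × Fin k) := univ.filter (fun u => u.2 = x u.1) with hSxdef
  have hSim : Sx = Finset.image (fun i : Fin 3 => (i, x i)) univ := by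
    ext u
    simp only [hSxdef, Finset.mem_filter, Finset.mem_univ, true_and, Finset.mem_image]
    constructor
    · intro h; exact ⟨u.1, Prod.ext rfl h.symm⟩
    · rintro ⟨i, _, rfl⟩; rfl
  have hsum3 : ∑ u ∈ Sx, d u = 3 := by
    rw [hSim, Finset.sum_image (by intro i _ j _ h; exact congrArg Prod.fst h)]
    have : ∀ i : Fin 3, d (i, x i) = 1 := fun i => (hd1 i).1
    simp [this]
  have hsplit : ∑ u ∈ Sx, d u
      = (Sx.filter fun u => (σ u).1 ≠ u.1).card + (Sx.filter fun u => (σ.symm u).1 ≠ u.1).card := by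
    rw [hd]
    dsimp only
    rw [Finset.sum_add_distrib, Finset.sum_boole, Finset.sum_boole]
    rfl
  have hbij : (Sx.filter fun u => (σ.symm u).1 ≠ u.1).card
      = (Sx.filter fun u => (σ u).1 ≠ u.1).card := by
    apply Finset.card_nbij' (fun u => σ.symm u) (fun u => σ u)
    · intro u hu
      simp only [hSxdef, Finset.mem_coe, Finset.mem_filter, Finset.mem_univ, true_and] at hu ⊢
      obtain ⟨hu1, hu2⟩ := hu
      rcases hbwd u hu2 with h | h
      · refine ⟨h.2, ?_⟩
        rw [Equiv.apply_symm_apply]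
        exact fun hh => hu2 hh.symm
      · exact absurd (hu1.symm.trans h.1) (hxy u.1)
    · intro u hu
      simp only [hSxdef, Finset.mem_coe, Finset.mem_filter, Finset.mem_univ, true_and] at hu ⊢
      obtain ⟨hu1, hu2⟩ := hu
      rcases hcross u hu2 with h | h
      · refine ⟨h.2, ?_⟩
        rw [Equiv.symm_apply_apply]
        exact fun hh => hu2 hh.symm
      · exact absurd (hu1.symm.trans h.1) (hxy u.1)
    · intro u _; exact σ.apply_symm_apply u
    · intro u _; exact σ.symm_apply_apply u
  rw [hsplit, hbij] at hsum3
  omega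

lemma net_adj : ∀ a b : Fin 6, netGraph.Adj a b ↔
    ((a, b) ∈ ([(0,1),(1,0),(1,2),(2,1),(0,2),(2,0),(0,3),(3,0),(1,4),(4,1),(2,5),(5,2)] :
      List (Fin 6 × Fin 6))) := by
  intro a b
  simp only [netGraph, SimpleGraph.fromEdgeSet_adj, Set.mem_insert_iff, Set.mem_singleton_iff]
  fin_cases a <;> fin_cases b <;> simp [Sym2.eq_iff] <;> decide


lemma sharp_clawfree {k : ℕ} {x y : Fin 3 → Fin k} (hxy : ∀ i, x i ≠ y i) :
    ClawFree (sharpGraph k x y) := by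
  rintro ⟨f, hinj, hadj⟩
  set c := f (Sum.inl 0) with hc
  set l : Fin 3 → Fin 3 × Fin k := fun j => f (Sum.inr j) with hl
  have hcl : ∀ j, (sharpGraph k x y).Adj c (l j) := by
    intro j
    rw [hc, hl, ← hadj]
    simp
  have hll : ∀ i j : Fin 3, ¬ (sharpGraph k x y).Adj (l i) (l j) := by
    intro i j
    rw [hl, ← hadj]
    simp
  have hlne : ∀ i j : Fin 3, i ≠ j → l i ≠ l j := fun i j hij h =>
    hij (Sum.inr.inj (hinj h))
  have pairA : ∀ i j : Fin 3, i ≠ j → (l i).1 = c.1 → (l j).1 = c.1 → False := by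
    intro i j hij hi hj
    exact hll i j (sharp_adj.2 ⟨hlne i j hij, Or.inl (hi.trans hj.symm)⟩)
  have pairB : ∀ i j : Fin 3, i ≠ j → (l i).1 ≠ c.1 → (l j).1 ≠ c.1 → False := by
    intro i j hij hi hj
    have Hi := (sharp_adj.1 (hcl i)).2
    have Hj := (sharp_adj.1 (hcl j)).2
    rcases Hi with h | h | h
    · exact hi h.symm
    · rcases Hj with h' | h' | h'
      · exact hj h'.symm
      · exact hll i j (sharp_adj.2 ⟨hlne i j hij, Or.inr (Or.inl ⟨h.2, h'.2⟩)⟩)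
      · exact hxy c.1 (h.1.symm.trans h'.1)
    · rcases Hj with h' | h' | h'
      · exact hj h'.symm
      · exact hxy c.1 (h'.1.symm.trans h.1)
      · exact hll i j (sharp_adj.2 ⟨hlne i j hij, Or.inr (Or.inr ⟨h.2, h'.2⟩)⟩)
  by_cases h0 : (l 0).1 = c.1 <;> by_cases h1 : (l 1).1 = c.1 <;> by_cases h2 : (l 2).1 = c.1
  · exact pairA 0 1 (by decide) h0 h1
  · exact pairA 0 1 (by decide) h0 h1
  · exact pairA 0 2 (by decide) h0 h2
  · exact pairB 1 2 (by decide) h1 h2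
  · exact pairA 1 2 (by decide) h1 h2
  · exact pairB 0 2 (by decide) h0 h2
  · exact pairB 0 1 (by decide) h0 h1
  · exact pairB 0 1 (by decide) h0 h1

lemma sharp_twoconn {k : ℕ} (hk : 3 ≤ k) {x y : Fin 3 → Fin k} (hxy : ∀ i, x i ≠ y i) :
    TwoConnected (sharpGraph k x y) := by
  have F1 : ∀ i : Fin 3, i + 1 ≠ i := by decide
  have F2 : ∀ i : Fin 3, i + 2 ≠ i := by decide
  have F3 : ∀ i : Fin 3, i + 2 ≠ i + 1 := by decide
  have Fcov : ∀ iv i : Fin 3, i = iv ∨ i = iv + 1 ∨ i = iv + 2 := by decide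
  constructor
  · have : Fintype.card (Fin 3 × Fin k) = 3 * k := by simp
    omega
  intro v
  set S : Set (Fin 3 × Fin k) := {w | w ≠ v} with hS
  have hmemS : ∀ w : Fin 3 × Fin k, w ≠ v → w ∈ S := fun w h => h
  -- base vertex
  have hBmem : ((v.1 + 1, x (v.1 + 1)) : Fin 3 × Fin k) ∈ S :=
    hmemS _ (fun h => F1 v.1 (congrArg Prod.fst h))
  set B : ↥S := ⟨(v.1 + 1, x (v.1 + 1)), hBmem⟩ with hB
  have hstep : ∀ a b : ↥S, (sharpGraph k x y).Adj a.1 b.1 →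
      ((sharpGraph k x y).induce S).Adj a b := fun a b h => h
  have hreach_same : ∀ a b : ↥S, a.1.1 = b.1.1 →
      ((sharpGraph k x y).induce S).Reachable a b := by
    intro a b hab
    by_cases h : a = b
    · rw [h]
    · exact (hstep a b (sharp_adj.2
        ⟨fun hh => h (Subtype.ext hh), Or.inl hab⟩)).reachable
  have hreach : ∀ a : ↥S, ((sharpGraph k x y).induce S).Reachable a B := by
    intro a
    rcases Fcov v.1 a.1.1 with h | h | h
    · -- a is in v's block
      by_cases hvx : v.2 = x v.1
      · -- v is the x-vertex of its block; use the y route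
        have hYmem : ((v.1, y v.1) : Fin 3 × Fin k) ∈ S := hmemS _ (fun he => by
          apply hxy v.1
          rw [← hvx, ← congrArg Prod.snd he])
        have hYjmem : ((v.1 + 1, y (v.1 + 1)) : Fin 3 × Fin k) ∈ S :=
          hmemS _ (fun he => F1 v.1 (congrArg Prod.fst he))
        refine (hreach_same a ⟨(v.1, y v.1), hYmem⟩ h).trans
          ((hstep _ ⟨(v.1 + 1, y (v.1 + 1)), hYjmem⟩ ?_).reachable.trans
            (hstep _ B ?_).reachable)
        · exact sharp_adj.2 ⟨fun he => F1 v.1 (congrArg Prod.fst he).symm,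
            Or.inr (Or.inr ⟨rfl, rfl⟩)⟩
        · exact sharp_adj.2 ⟨fun he => hxy (v.1 + 1) (congrArg Prod.snd he).symm,
            Or.inl rfl⟩
      · -- the x-vertex of v's block survives
        have hXmem : ((v.1, x v.1) : Fin 3 × Fin k) ∈ S :=
          hmemS _ (fun he => hvx (congrArg Prod.snd he).symm)
        refine (hreach_same a ⟨(v.1, x v.1), hXmem⟩ h).trans
          (hstep _ B ?_).reachable
        exact sharp_adj.2 ⟨fun he => F1 v.1 (congrArg Prod.fst he).symm,
          Or.inr (Or.inl ⟨rfl, rfl⟩)⟩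
    · exact hreach_same a B h
    · have hMmem : ((v.1 + 2, x (v.1 + 2)) : Fin 3 × Fin k) ∈ S :=
        hmemS _ (fun he => F2 v.1 (congrArg Prod.fst he))
      refine (hreach_same a ⟨(v.1 + 2, x (v.1 + 2)), hMmem⟩ h).trans
        (hstep _ B ?_).reachable
      exact sharp_adj.2 ⟨fun he => F3 v.1 (congrArg Prod.fst he),
        Or.inr (Or.inl ⟨rfl, rfl⟩)⟩
  haveI : Nonempty ↥S := ⟨B⟩
  exact ⟨fun a b => (hreach a).trans (hreach b).symm⟩

lemma sharp_deg {k : ℕ} {x y z : Fin 3 → Fin k}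
    (hxz : ∀ i, x i ≠ z i) (hyz : ∀ i, y i ≠ z i) (i : Fin 3) :
    ((sharpGraph k x y).neighborSet (i, z i)).ncard = k - 1 := by
  have hset : (sharpGraph k x y).neighborSet (i, z i)
      = (fun w => ((i, w) : Fin 3 × Fin k)) '' {w | w ≠ z i} := by
    ext u
    simp only [SimpleGraph.mem_neighborSet, Set.mem_image, Set.mem_setOf_eq]
    constructor
    · intro h
      obtain ⟨hne, h1 | h1 | h1⟩ := sharp_adj.1 h
      · refine ⟨u.2, ?_, ?_⟩
        · intro hh
          exact hne (Prod.ext h1 hh.symm)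
        · exact Prod.ext h1 rfl
      · exact absurd h1.1.symm (hxz i)
      · exact absurd h1.1.symm (hyz i)
    · rintro ⟨w, hw, rfl⟩
      exact sharp_adj.2 ⟨fun he => hw (congrArg Prod.snd he).symm, Or.inl rfl⟩
  rw [hset, Set.ncard_image_of_injective _ (fun a b h => congrArg Prod.snd h)]
  have h2 : {w : Fin k | w ≠ z i} = Set.univ \ {z i} := by
    ext w; simp
  rw [h2, Set.ncard_diff_singleton_of_mem (Set.mem_univ _), Set.ncard_univ]
  simp

lemma sharp_netcopy {k : ℕ} {x y z : Fin 3 → Fin k}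
    (hxy : ∀ i, x i ≠ y i) (hxz : ∀ i, x i ≠ z i) (hyz : ∀ i, y i ≠ z i) :
    IsInducedCopy netGraph (sharpGraph k x y)
      ![((0 : Fin 3), x 0), ((1 : Fin 3), x 1), ((2 : Fin 3), x 2),
        ((0 : Fin 3), z 0), ((1 : Fin 3), z 1), ((2 : Fin 3), z 2)] := by
  have hyx : ∀ i, y i ≠ x i := fun i => (hxy i).symm
  have hzx : ∀ i, z i ≠ x i := fun i => (hxz i).symm
  have hzy : ∀ i, z i ≠ y i := fun i => (hyz i).symm
  have hf5 : ![((0 : Fin 3), x 0), ((1 : Fin 3), x 1), ((2 : Fin 3), x 2),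
      ((0 : Fin 3), z 0), ((1 : Fin 3), z 1), ((2 : Fin 3), z 2)] (5 : Fin 6)
      = ((2 : Fin 3), z 2) := rfl
  constructor
  · intro a b hab
    fin_cases a <;> fin_cases b <;>
      simp_all [hf5, Prod.ext_iff, hxz, hzx] <;> exact absurd hab (by decide)
  · intro a b
    rw [net_adj]
    fin_cases a <;> fin_cases b <;>
      simp [hf5, sharp_adj, Prod.ext_iff, hxy, hxz, hyz, hyx, hzx, hzy] <;> decide

/-- Sharpness of the degree condition in Broersma's conjecture. -/
theorem sharpness_example (k : ℕ) (hk : 3 ≤ k) (x y z : Fin 3 → Fin k)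
    (hxy : ∀ i, x i ≠ y i) (hxz : ∀ i, x i ≠ z i) (hyz : ∀ i, y i ≠ z i) :
    ClawFree (sharpGraph k x y) ∧
    TwoConnected (sharpGraph k x y) ∧
    ¬ (sharpGraph k x y).IsHamiltonian ∧
    IsInducedCopy netGraph (sharpGraph k x y)
      ![((0 : Fin 3), x 0), ((1 : Fin 3), x 1), ((2 : Fin 3), x 2),
        ((0 : Fin 3), z 0), ((1 : Fin 3), z 1), ((2 : Fin 3), z 2)] ∧
    (∀ i : Fin 3, ((sharpGraph k x y).neighborSet (i, z i)).ncard = k - 1) ∧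
    k - 1 = (Fintype.card (Fin 3 × Fin k) - 3) / 3 := by
  refine ⟨sharp_clawfree hxy, sharp_twoconn hk hxy, sharp_not_ham hk hxy,
    sharp_netcopy hxy hxz hyz, fun i => sharp_deg hxz hyz i, ?_⟩
  have : Fintype.card (Fin 3 × Fin k) = 3 * k := by simp
  rw [this]
  omega
end

section
/- The complete bipartite graph K_{3,3} is collapsible. -/
open SimpleGraph

/-- A graph with at least two vertices is collapsible if for every vertex subset `S`
of even (finite) cardinality there is a spanning connected subgraph whose set of
odd-degree vertices is exactly `S`. -/
def Collapsible {W : Type*} (Ξ : SimpleGraph W) : Prop :=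
  2 ≤ Nat.card W ∧ ∀ S : Set W, S.Finite → Even S.ncard →
    ∃ F : SimpleGraph W, F ≤ Ξ ∧ F.Connected ∧
      ∀ v : W, (Odd (F.neighborSet v).ncard ↔ v ∈ S)

/-- The bipartite subgraph of `K_{3,3}` determined by an edge set `E`. -/
def K33Sub (E : Finset (Fin 3 × Fin 3)) : SimpleGraph (Fin 3 ⊕ Fin 3) where
  Adj u v :=
    match u, v with
    | Sum.inl i, Sum.inr j => (i, j) ∈ E
    | Sum.inr j, Sum.inl i => (i, j) ∈ E
    | _, _ => False
  symm := ⟨by rintro (i | i) (j | j) h <;> exact h⟩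
  loopless := ⟨by rintro (i | i) h <;> exact h⟩

instance (E : Finset (Fin 3 × Fin 3)) : DecidableRel (K33Sub E).Adj := fun u v =>
  match u, v with
  | Sum.inl _, Sum.inr _ => inferInstanceAs (Decidable (_ ∈ E))
  | Sum.inr _, Sum.inl _ => inferInstanceAs (Decidable (_ ∈ E))
  | Sum.inl _, Sum.inl _ => inferInstanceAs (Decidable False)
  | Sum.inr _, Sum.inr _ => inferInstanceAs (Decidable False)

lemma K33Sub_le (E : Finset (Fin 3 × Fin 3)) :
    K33Sub E ≤ completeBipartiteGraph (Fin 3) (Fin 3) := by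
  rintro (i | i) (j | j) h <;> simp_all [K33Sub, completeBipartiteGraph]

lemma K33Sub_mono {E E' : Finset (Fin 3 × Fin 3)} (h : E ⊆ E') :
    K33Sub E ≤ K33Sub E' := by
  rintro (i | i) (j | j) hadj <;> first | exact hadj.elim | exact h hadj

def K33T1 : Finset (Fin 3 × Fin 3) := {(0,0), (0,1), (0,2), (1,0), (2,1)}
def K33T2 : Finset (Fin 3 × Fin 3) := {(0,0), (0,1), (1,0), (1,2), (2,0)}
def K33T3 : Finset (Fin 3 × Fin 3) := {(0,1), (0,2), (1,0), (1,1), (2,0)}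

lemma K33T1_conn : (K33Sub K33T1).Connected := by
  rw [connected_iff]; exact ⟨by decide, ⟨Sum.inl 0⟩⟩
lemma K33T2_conn : (K33Sub K33T2).Connected := by
  rw [connected_iff]; exact ⟨by decide, ⟨Sum.inl 0⟩⟩
lemma K33T3_conn : (K33Sub K33T3).Connected := by
  rw [connected_iff]; exact ⟨by decide, ⟨Sum.inl 0⟩⟩

def K33WL : List (Finset (Fin 3 × Fin 3)) :=
  [{(0,0), (0,1), (0,2), (1,0), (2,1)},
   {(0,0), (0,1), (0,2), (1,0), (1,1), (2,1)},
   {(0,0), (0,1), (0,2), (1,0), (1,2), (2,1)},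
   {(0,0), (0,1), (0,2), (1,0), (2,0), (2,1)},
   {(0,0), (0,1), (0,2), (1,0), (2,1), (2,2)},
   {(0,0), (0,1), (0,2), (1,0), (1,1), (1,2), (2,1)},
   {(0,0), (0,1), (0,2), (1,0), (1,1), (2,0), (2,1)},
   {(0,0), (0,1), (0,2), (1,0), (1,1), (2,1), (2,2)},
   {(0,0), (0,1), (0,2), (1,0), (1,2), (2,0), (2,1)},
   {(0,0), (0,1), (0,2), (1,0), (1,2), (2,1), (2,2)},
   {(0,0), (0,1), (0,2), (1,0), (2,0), (2,1), (2,2)},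
   {(0,0), (0,1), (0,2), (1,0), (1,1), (1,2), (2,0), (2,1)},
   {(0,0), (0,1), (0,2), (1,0), (1,1), (1,2), (2,1), (2,2)},
   {(0,0), (0,1), (0,2), (1,0), (1,1), (2,0), (2,1), (2,2)},
   {(0,0), (0,1), (0,2), (1,0), (1,2), (2,0), (2,1), (2,2)},
   {(0,0), (0,1), (0,2), (1,0), (1,1), (1,2), (2,0), (2,1), (2,2)},
   {(0,0), (0,1), (1,0), (1,2), (2,0)},
   {(0,0), (0,1), (1,0), (1,1), (1,2), (2,0)},
   {(0,0), (0,1), (1,0), (1,2), (2,0), (2,1)},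
   {(0,0), (0,1), (1,0), (1,2), (2,0), (2,2)},
   {(0,0), (0,1), (1,0), (1,1), (1,2), (2,0), (2,1)},
   {(0,0), (0,1), (1,0), (1,1), (1,2), (2,0), (2,2)},
   {(0,0), (0,1), (1,0), (1,2), (2,0), (2,1), (2,2)},
   {(0,0), (0,1), (1,0), (1,1), (1,2), (2,0), (2,1), (2,2)},
   {(0,1), (0,2), (1,0), (1,1), (2,0)},
   {(0,1), (0,2), (1,0), (1,1), (1,2), (2,0)},
   {(0,1), (0,2), (1,0), (1,1), (2,0), (2,1)},
   {(0,1), (0,2), (1,0), (1,1), (2,0), (2,2)},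
   {(0,1), (0,2), (1,0), (1,1), (1,2), (2,0), (2,1)},
   {(0,1), (0,2), (1,0), (1,1), (1,2), (2,0), (2,2)},
   {(0,1), (0,2), (1,0), (1,1), (2,0), (2,1), (2,2)},
   {(0,1), (0,2), (1,0), (1,1), (1,2), (2,0), (2,1), (2,2)}]

lemma K33key : ∀ T : Finset (Fin 3 ⊕ Fin 3), Even T.card →
    ∃ E ∈ K33WL, (K33T1 ⊆ E ∨ K33T2 ⊆ E ∨ K33T3 ⊆ E) ∧
      ∀ v, (Odd ((K33Sub E).degree v) ↔ v ∈ T) := by decide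

/-- The complete bipartite graph `K_{3,3}` is collapsible. -/
theorem k33_collapsible : Collapsible (completeBipartiteGraph (Fin 3) (Fin 3)) := by
  constructor
  · simp [Nat.card_eq_fintype_card]
  · intro S hS hEven
    have hT : Even hS.toFinset.card := by
      rwa [← Set.ncard_eq_toFinset_card S hS]
    obtain ⟨E, _, hsub, hdeg⟩ := K33key hS.toFinset hT
    refine ⟨K33Sub E, K33Sub_le E, ?_, ?_⟩
    · rcases hsub with h | h | h
      · exact K33T1_conn.mono (K33Sub_mono h)
      · exact K33T2_conn.mono (K33Sub_mono h)
      · exact K33T3_conn.mono (K33Sub_mono h)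
    · intro v
      have : ((K33Sub E).neighborSet v).ncard = (K33Sub E).degree v := by
        rw [Set.ncard_eq_toFinset_card', SimpleGraph.degree, neighborFinset_def]
      rw [this, hdeg v, Set.Finite.mem_toFinset]
end

section
/- Let H be a triangle-free simple graph and let {e1, e2, e3} be a matching of H (three pairwise nonadjacent edges) with ed(e1) + ed(e2) + ed(e3) ≥ |E(H)| + 2. Then the subgraph Ξ of H induced by the six endpoints of e1, e2, e3 is isomorphic to K_{3,3} or to K_{3,3}^-, and at most one edge of H has no endpoint in Ξ. -/
open SimpleGraph

/-- The edge-degree of `e` in `H`: the number of edges of `H` other than `e`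
sharing an endpoint with `e`. -/
noncomputable def edgeDeg {V : Type*} (H : SimpleGraph V) (e : Sym2 V) : ℕ :=
  {f | f ∈ H.edgeSet ∧ f ≠ e ∧ ∃ v, v ∈ f ∧ v ∈ e}.ncard

/-- Two edges are nonadjacent if they share no endpoint. -/
def EdgesNonadj {V : Type*} (e f : Sym2 V) : Prop :=
  ∀ v, v ∈ e → v ∉ f

section AuxHelpers

variable {V : Type*} (H : SimpleGraph V)

lemma iso_of_map {W : Type*} (G' : SimpleGraph W) (a : W → V)
    (hinj : Function.Injective a) (hadj : ∀ x y, H.Adj (a x) (a y) ↔ G'.Adj x y) :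
    Nonempty (H.induce (Set.range a) ≃g G') := by
  refine ⟨⟨(Equiv.ofInjective a hinj).symm, ?_⟩⟩
  intro x y
  rw [← hadj]
  simp [Equiv.apply_ofInjective_symm]

lemma range_fin3 (x y z : V) : Set.range ![x, y, z] = {x, y, z} := by
  ext w
  constructor
  · rintro ⟨i, rfl⟩; fin_cases i <;> simp
  · rintro (rfl | rfl | rfl)
    exacts [⟨0, rfl⟩, ⟨1, rfl⟩, ⟨2, rfl⟩]

lemma injSix (u₁ u₂ u₃ v₁ v₂ v₃ : V)
    (n1 : u₁ ≠ u₂) (n2 : u₁ ≠ u₃) (n3 : u₂ ≠ u₃)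
    (n4 : v₁ ≠ v₂) (n5 : v₁ ≠ v₃) (n6 : v₂ ≠ v₃)
    (n7 : u₁ ≠ v₁) (n8 : u₁ ≠ v₂) (n9 : u₁ ≠ v₃)
    (n10 : u₂ ≠ v₁) (n11 : u₂ ≠ v₂) (n12 : u₂ ≠ v₃)
    (n13 : u₃ ≠ v₁) (n14 : u₃ ≠ v₂) (n15 : u₃ ≠ v₃) :
    Function.Injective (Sum.elim ![u₁, u₂, u₃] ![v₁, v₂, v₃]) := by
  intro p q hpq
  rcases p with p | p <;> rcases q with q | q <;> fin_cases p <;> fin_cases q <;>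
    simp_all

lemma helperK33 (x y : Fin 3 → V)
    (hinj : Function.Injective (Sum.elim x y))
    (hxy : ∀ i j, H.Adj (x i) (y j))
    (hxx : ∀ i j, ¬H.Adj (x i) (x j)) (hyy : ∀ i j, ¬H.Adj (y i) (y j)) :
    Nonempty (H.induce (Set.range (Sum.elim x y)) ≃g
      completeBipartiteGraph (Fin 3) (Fin 3)) := by
  refine iso_of_map H _ _ hinj ?_
  rintro (i | i) (j | j) <;>
    simp only [Sum.elim_inl, Sum.elim_inr, completeBipartiteGraph_adj,
      Sum.isLeft_inl, Sum.isRight_inl, Sum.isLeft_inr, Sum.isRight_inr] <;> simp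
  · exact hxx i j
  · exact hxy i j
  · exact (hxy j i).symm
  · exact hyy i j

lemma helperK33m (x y : Fin 3 → V)
    (hinj : Function.Injective (Sum.elim x y))
    (hxy : ∀ i j, ¬(i = 1 ∧ j = 2) → H.Adj (x i) (y j))
    (hmiss : ¬H.Adj (x 1) (y 2))
    (hxx : ∀ i j, ¬H.Adj (x i) (x j)) (hyy : ∀ i j, ¬H.Adj (y i) (y j)) :
    Nonempty (H.induce (Set.range (Sum.elim x y)) ≃g
      (completeBipartiteGraph (Fin 3) (Fin 3)).deleteEdges
        {s(Sum.inl 1, Sum.inr 2)}) := by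
  refine iso_of_map H _ _ hinj ?_
  rintro (i | i) (j | j) <;>
    simp only [Sum.elim_inl, Sum.elim_inr, deleteEdges_adj, completeBipartiteGraph_adj,
      Sum.isLeft_inl, Sum.isRight_inl, Sum.isLeft_inr, Sum.isRight_inr,
      Set.mem_singleton_iff, Sym2.eq_iff] <;> simp
  · exact hxx i j
  · constructor
    · rintro h rfl rfl; exact hmiss h
    · intro h; exact hxy i j (by tauto)
  · constructor
    · rintro h rfl rfl; exact hmiss h.symm
    · intro h; exact (hxy j i (by tauto)).symm
  · exact hyy i j

/-- matching pattern: edges x–z and y–w present, x–w and y–z absent. -/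
def MP (x y z w : V) : Prop :=
  H.Adj x z ∧ H.Adj y w ∧ ¬H.Adj x w ∧ ¬H.Adj y z

/-- single-edge pattern: among pairs from {x,y} to {z,w}, only x–z present. -/
def SP (x y z w : V) : Prop :=
  H.Adj x z ∧ ¬H.Adj x w ∧ ¬H.Adj y z ∧ ¬H.Adj y w

variable {H}

lemma MP.flip {x y z w : V} (h : MP H x y z w) : MP H z w x y :=
  ⟨h.1.symm, h.2.1.symm, fun h' => h.2.2.2 h'.symm, fun h' => h.2.2.1 h'.symm⟩

lemma MP.swap {x y z w : V} (h : MP H x y z w) : MP H y x w z :=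
  ⟨h.2.1, h.1, h.2.2.2, h.2.2.1⟩

end AuxHelpers

set_option maxHeartbeats 1000000 in
lemma pair_inter {V : Type*} (H : SimpleGraph V) (a b c d : V)
    (hab : a ≠ b) (hac : a ≠ c) (had : a ≠ d) (hbc : b ≠ c) (hbd : b ≠ d) (hcd : c ≠ d) :
    {f | f ∈ H.edgeSet ∧ f ≠ s(a,b) ∧ ∃ v, v ∈ f ∧ v ∈ s(a,b)} ∩
      {f | f ∈ H.edgeSet ∧ f ≠ s(c,d) ∧ ∃ v, v ∈ f ∧ v ∈ s(c,d)} =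
      H.edgeSet ∩ {s(a,c), s(a,d), s(b,c), s(b,d)} := by
  ext f
  constructor
  · intro hf
    induction f using Sym2.ind with
    | _ x y =>
      simp only [Set.mem_inter_iff, Set.mem_setOf_eq, Sym2.mem_iff] at hf
      obtain ⟨⟨hE, -, u, hu1, hu2⟩, -, -, v, hv1, hv2⟩ := hf
      refine ⟨hE, ?_⟩
      have huv : u ≠ v := by
        rintro rfl
        rcases hu2 with rfl | rfl <;> rcases hv2 with rfl | rfl <;> simp_all
      have hf : s(x, y) = s(u, v) := by
        rcases hu1 with rfl | rfl <;> rcases hv1 with rfl | rfl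
        · exact absurd rfl huv
        · rfl
        · exact Sym2.eq_swap
        · exact absurd rfl huv
      simp only [Set.mem_insert_iff, Set.mem_singleton_iff]
      rw [hf]
      rcases hu2 with rfl | rfl <;> rcases hv2 with rfl | rfl <;> tauto
  · rintro ⟨hE, h⟩
    simp only [Set.mem_insert_iff, Set.mem_singleton_iff] at h
    rcases h with rfl | rfl | rfl | rfl <;>
      refine ⟨⟨hE, ?_, ?_⟩, hE, ?_, ?_⟩ <;>
      simp [Sym2.eq_iff, hab, hac, had, hbc, hbd, hcd,
        hab.symm, hac.symm, had.symm, hbc.symm, hbd.symm, hcd.symm]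

open Classical in
lemma ncard_inter_quad {α : Type*} [Finite α] (E : Set α) (x₁ x₂ x₃ x₄ : α)
    (h12 : x₁ ≠ x₂) (h13 : x₁ ≠ x₃) (h14 : x₁ ≠ x₄)
    (h23 : x₂ ≠ x₃) (h24 : x₂ ≠ x₄) (h34 : x₃ ≠ x₄) :
    (E ∩ {x₁, x₂, x₃, x₄}).ncard =
      (if x₁ ∈ E then 1 else 0) + (if x₂ ∈ E then 1 else 0) +
      (if x₃ ∈ E then 1 else 0) + (if x₄ ∈ E then 1 else 0) := by
  classical
  have h : E ∩ {x₁, x₂, x₃, x₄} =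
      ((({x₁, x₂, x₃, x₄} : Finset α).filter (· ∈ E)) : Finset α) := by
    ext z
    simp only [Set.mem_inter_iff, Set.mem_insert_iff, Set.mem_singleton_iff,
      Finset.coe_filter, Finset.mem_insert, Finset.mem_singleton, Set.mem_setOf_eq]
    tauto
  rw [h, Set.ncard_coe_finset, Finset.card_filter]
  rw [Finset.sum_insert (by simp [h12, h13, h14]),
    Finset.sum_insert (by simp [h23, h24]),
    Finset.sum_insert (by simp [h34]), Finset.sum_singleton]
  ring

set_option maxHeartbeats 1000000 in
lemma pair_struct {V : Type*} [Finite V] (H : SimpleGraph V)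
    (htri : ∀ x y z, H.Adj x y → H.Adj x z → ¬H.Adj y z) (a b c d : V)
    (hab' : a ≠ b) (hac : a ≠ c) (had : a ≠ d) (hbc : b ≠ c) (hbd : b ≠ d) (hcd' : c ≠ d)
    (hab : H.Adj a b) (hcd : H.Adj c d) :
    ({f | f ∈ H.edgeSet ∧ f ≠ s(a,b) ∧ ∃ v, v ∈ f ∧ v ∈ s(a,b)} ∩
      {f | f ∈ H.edgeSet ∧ f ≠ s(c,d) ∧ ∃ v, v ∈ f ∧ v ∈ s(c,d)}).ncard ≤ 2 ∧
    (({f | f ∈ H.edgeSet ∧ f ≠ s(a,b) ∧ ∃ v, v ∈ f ∧ v ∈ s(a,b)} ∩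
      {f | f ∈ H.edgeSet ∧ f ≠ s(c,d) ∧ ∃ v, v ∈ f ∧ v ∈ s(c,d)}).ncard = 2 →
      MP H a b c d ∨ MP H a b d c) ∧
    (({f | f ∈ H.edgeSet ∧ f ≠ s(a,b) ∧ ∃ v, v ∈ f ∧ v ∈ s(a,b)} ∩
      {f | f ∈ H.edgeSet ∧ f ≠ s(c,d) ∧ ∃ v, v ∈ f ∧ v ∈ s(c,d)}).ncard = 1 →
      SP H a b c d ∨ SP H a b d c ∨ SP H b a c d ∨ SP H b a d c) := by
  classical
  have hval : ({f | f ∈ H.edgeSet ∧ f ≠ s(a,b) ∧ ∃ v, v ∈ f ∧ v ∈ s(a,b)} ∩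
      {f | f ∈ H.edgeSet ∧ f ≠ s(c,d) ∧ ∃ v, v ∈ f ∧ v ∈ s(c,d)}).ncard =
      (if H.Adj a c then 1 else 0) + (if H.Adj a d then 1 else 0) +
      (if H.Adj b c then 1 else 0) + (if H.Adj b d then 1 else 0) := by
    rw [pair_inter H a b c d hab' hac had hbc hbd hcd']
    have := ncard_inter_quad H.edgeSet s(a,c) s(a,d) s(b,c) s(b,d)
      (by simp [Sym2.eq_iff]; tauto) (by simp [Sym2.eq_iff]; tauto)
      (by simp [Sym2.eq_iff]; tauto) (by simp [Sym2.eq_iff]; tauto)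
      (by simp [Sym2.eq_iff]; tauto) (by simp [Sym2.eq_iff]; tauto)
    simpa only [SimpleGraph.mem_edgeSet] using this
  by_cases hp : H.Adj a c <;> by_cases hq : H.Adj a d <;>
    by_cases hr : H.Adj b c <;> by_cases hs' : H.Adj b d <;>
    first
    | exact absurd hcd (htri a c d hp hq)
    | exact absurd hab (htri c a b hp.symm hr.symm)
    | exact absurd hab (htri d a b hq.symm hs'.symm)
    | exact absurd hcd (htri b c d hr hs')
    | exact ⟨by rw [hval]; simp [hp, hq, hr, hs'],
        fun h => Or.inl ⟨hp, hs', hq, hr⟩,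
        fun h => absurd h (by rw [hval]; simp [hp, hq, hr, hs'])⟩
    | exact ⟨by rw [hval]; simp [hp, hq, hr, hs'],
        fun h => Or.inr ⟨hq, hr, hp, hs'⟩,
        fun h => absurd h (by rw [hval]; simp [hp, hq, hr, hs'])⟩
    | exact ⟨by rw [hval]; simp [hp, hq, hr, hs'],
        fun h => absurd h (by rw [hval]; simp [hp, hq, hr, hs']),
        fun h => Or.inl ⟨hp, hq, hr, hs'⟩⟩
    | exact ⟨by rw [hval]; simp [hp, hq, hr, hs'],
        fun h => absurd h (by rw [hval]; simp [hp, hq, hr, hs']),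
        fun h => Or.inr (Or.inl ⟨hq, hp, hs', hr⟩)⟩
    | exact ⟨by rw [hval]; simp [hp, hq, hr, hs'],
        fun h => absurd h (by rw [hval]; simp [hp, hq, hr, hs']),
        fun h => Or.inr (Or.inr (Or.inl ⟨hr, hs', hp, hq⟩))⟩
    | exact ⟨by rw [hval]; simp [hp, hq, hr, hs'],
        fun h => absurd h (by rw [hval]; simp [hp, hq, hr, hs']),
        fun h => Or.inr (Or.inr (Or.inr ⟨hs', hr, hq, hp⟩))⟩
    | exact ⟨by rw [hval]; simp [hp, hq, hr, hs'],
        fun h => absurd h (by rw [hval]; simp [hp, hq, hr, hs']),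
        fun h => absurd h (by rw [hval]; simp [hp, hq, hr, hs'])⟩



lemma or4a {p q r s : Prop} (h : p ∨ q ∨ r ∨ s) : q ∨ p ∨ s ∨ r := by tauto
lemma or4b {p q r s : Prop} (h : p ∨ q ∨ r ∨ s) : r ∨ s ∨ p ∨ q := by tauto
lemma or4c {p q r s : Prop} (h : p ∨ q ∨ r ∨ s) : s ∨ r ∨ q ∨ p := by tauto

section MainCases

variable {V : Type*} {H : SimpleGraph V}

lemma caseA (htri : ∀ x y z, H.Adj x y → H.Adj x z → ¬H.Adj y z)
    (u₁ u₂ u₃ v₁ v₂ v₃ : V) {S : Set V}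
    (hS : S = {u₁, v₁, u₂, v₂, u₃, v₃})
    (hA₁ : H.Adj u₁ v₁) (hA₂ : H.Adj u₂ v₂) (hA₃ : H.Adj u₃ v₃)
    (m12 : MP H u₁ v₁ v₂ u₂) (m13 : MP H u₁ v₁ v₃ u₃)
    (m23 : MP H u₂ v₂ v₃ u₃ ∨ MP H u₂ v₂ u₃ v₃)
    (n1 : u₁ ≠ u₂ := by assumption) (n2 : u₁ ≠ u₃ := by assumption)
    (n3 : u₂ ≠ u₃ := by assumption)
    (n4 : v₁ ≠ v₂ := by assumption) (n5 : v₁ ≠ v₃ := by assumption)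
    (n6 : v₂ ≠ v₃ := by assumption)
    (n7 : u₁ ≠ v₁ := by assumption) (n8 : u₁ ≠ v₂ := by assumption)
    (n9 : u₁ ≠ v₃ := by assumption)
    (n10 : u₂ ≠ v₁ := by assumption) (n11 : u₂ ≠ v₂ := by assumption)
    (n12 : u₂ ≠ v₃ := by assumption)
    (n13 : u₃ ≠ v₁ := by assumption) (n14 : u₃ ≠ v₂ := by assumption)
    (n15 : u₃ ≠ v₃ := by assumption) :
    Nonempty (H.induce S ≃g completeBipartiteGraph (Fin 3) (Fin 3)) := by
  obtain ⟨p12, q12, r12, s12⟩ := m12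
  obtain ⟨p13, q13, r13, s13⟩ := m13
  rcases m23 with ⟨p23, q23, r23, s23⟩ | ⟨p23, q23, r23, s23⟩
  swap
  · exact absurd p23 (htri v₁ u₂ u₃ q12 q13)
  have hR : S = Set.range (Sum.elim ![u₁, u₂, u₃] ![v₁, v₂, v₃]) := by
    rw [hS, Set.Sum.elim_range, range_fin3, range_fin3]
    ext w; simp only [Set.mem_insert_iff, Set.mem_union, Set.mem_singleton_iff]; tauto
  rw [hR]
  refine helperK33 H _ _
    (injSix u₁ u₂ u₃ v₁ v₂ v₃ n1 n2 n3 n4 n5 n6 n7 n8 n9 n10 n11 n12 n13 n14 n15) ?_ ?_ ?_ <;>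
    intro i j <;> fin_cases i <;> fin_cases j <;>
    simp only [Matrix.cons_val', Matrix.cons_val_zero, Matrix.cons_val_one, Matrix.head_cons,
      Matrix.cons_val_two, Matrix.tail_cons, Matrix.head_fin_const, Matrix.empty_val',
      Matrix.cons_val_fin_one]
  exacts [hA₁, p12, p13, q12.symm, hA₂, p23, q13.symm, q23.symm, hA₃,
    H.loopless.irrefl u₁, r12, r13, fun h => r12 h.symm, H.loopless.irrefl u₂, r23,
    fun h => r13 h.symm, fun h => r23 h.symm, H.loopless.irrefl u₃,
    H.loopless.irrefl v₁, s12, s13, fun h => s12 h.symm, H.loopless.irrefl v₂, s23,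
    fun h => s13 h.symm, fun h => s23 h.symm, H.loopless.irrefl v₃]

lemma caseB (htri : ∀ x y z, H.Adj x y → H.Adj x z → ¬H.Adj y z)
    (u₁ u₂ u₃ v₁ v₂ v₃ : V) {S : Set V}
    (hS : S = {u₁, v₁, u₂, v₂, u₃, v₃})
    (hA₁ : H.Adj u₁ v₁) (hA₂ : H.Adj u₂ v₂) (hA₃ : H.Adj u₃ v₃)
    (m12 : MP H u₁ v₁ u₂ v₂) (m13 : MP H u₁ v₁ u₃ v₃)
    (m23 : SP H u₂ v₂ u₃ v₃ ∨ SP H u₂ v₂ v₃ u₃ ∨ SP H v₂ u₂ u₃ v₃ ∨ SP H v₂ u₂ v₃ u₃)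
    (n1 : u₁ ≠ u₂ := by assumption) (n2 : u₁ ≠ u₃ := by assumption)
    (n3 : u₂ ≠ u₃ := by assumption)
    (n4 : v₁ ≠ v₂ := by assumption) (n5 : v₁ ≠ v₃ := by assumption)
    (n6 : v₂ ≠ v₃ := by assumption)
    (n7 : u₁ ≠ v₁ := by assumption) (n8 : u₁ ≠ v₂ := by assumption)
    (n9 : u₁ ≠ v₃ := by assumption)
    (n10 : u₂ ≠ v₁ := by assumption) (n11 : u₂ ≠ v₂ := by assumption)
    (n12 : u₂ ≠ v₃ := by assumption)
    (n13 : u₃ ≠ v₁ := by assumption) (n14 : u₃ ≠ v₂ := by assumption)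
    (n15 : u₃ ≠ v₃ := by assumption) :
    ∃ e ∈ (completeBipartiteGraph (Fin 3) (Fin 3)).edgeSet,
      Nonempty (H.induce S ≃g (completeBipartiteGraph (Fin 3) (Fin 3)).deleteEdges {e}) := by
  obtain ⟨p12, q12, r12, s12⟩ := m12
  obtain ⟨p13, q13, r13, s13⟩ := m13
  refine ⟨s(Sum.inl 1, Sum.inr 2), by simp, ?_⟩
  rcases m23 with ⟨p23, q23, r23, s23⟩ | ⟨p23, q23, r23, s23⟩ |
    ⟨p23, q23, r23, s23⟩ | ⟨p23, q23, r23, s23⟩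
  · exact absurd p23 (htri u₁ u₂ u₃ p12 p13)
  · have hR : S = Set.range (Sum.elim ![u₁, v₂, v₃] ![v₁, u₂, u₃]) := by
      rw [hS, Set.Sum.elim_range, range_fin3, range_fin3]
      ext w; simp only [Set.mem_insert_iff, Set.mem_union, Set.mem_singleton_iff]; tauto
    rw [hR]
    refine helperK33m H _ _
      (injSix u₁ v₂ v₃ v₁ u₂ u₃ n8 n9 n6 n10.symm n13.symm n3 n7 n1 n2
        n4.symm n11.symm n14.symm n5.symm n12.symm n15.symm) ?_ ?_ ?_ ?_
    · intro i j h; fin_cases i <;> fin_cases j <;>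
        simp only [Matrix.cons_val', Matrix.cons_val_zero, Matrix.cons_val_one, Matrix.head_cons,
          Matrix.cons_val_two, Matrix.tail_cons, Matrix.head_fin_const, Matrix.empty_val',
          Matrix.cons_val_fin_one]
      exacts [hA₁, p12, p13, q12.symm, hA₂.symm, absurd ⟨rfl, rfl⟩ h,
        q13.symm, p23.symm, hA₃.symm]
    · exact s23
    · intro i j; fin_cases i <;> fin_cases j <;>
        simp only [Matrix.cons_val', Matrix.cons_val_zero, Matrix.cons_val_one, Matrix.head_cons,
          Matrix.cons_val_two, Matrix.tail_cons, Matrix.head_fin_const, Matrix.empty_val',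
          Matrix.cons_val_fin_one]
      exacts [H.loopless.irrefl u₁, r12, r13, fun h => r12 h.symm, H.loopless.irrefl v₂, r23,
        fun h => r13 h.symm, fun h => r23 h.symm, H.loopless.irrefl v₃]
    · intro i j; fin_cases i <;> fin_cases j <;>
        simp only [Matrix.cons_val', Matrix.cons_val_zero, Matrix.cons_val_one, Matrix.head_cons,
          Matrix.cons_val_two, Matrix.tail_cons, Matrix.head_fin_const, Matrix.empty_val',
          Matrix.cons_val_fin_one]
      exacts [H.loopless.irrefl v₁, s12, s13, fun h => s12 h.symm, H.loopless.irrefl u₂, q23,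
        fun h => s13 h.symm, fun h => q23 h.symm, H.loopless.irrefl u₃]
  · have hR : S = Set.range (Sum.elim ![u₁, v₃, v₂] ![v₁, u₃, u₂]) := by
      rw [hS, Set.Sum.elim_range, range_fin3, range_fin3]
      ext w; simp only [Set.mem_insert_iff, Set.mem_union, Set.mem_singleton_iff]; tauto
    rw [hR]
    refine helperK33m H _ _
      (injSix u₁ v₃ v₂ v₁ u₃ u₂ n9 n8 n6.symm n13.symm n10.symm n3.symm n7 n2 n1
        n5.symm n15.symm n12.symm n4.symm n14.symm n11.symm) ?_ ?_ ?_ ?_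
    · intro i j h; fin_cases i <;> fin_cases j <;>
        simp only [Matrix.cons_val', Matrix.cons_val_zero, Matrix.cons_val_one, Matrix.head_cons,
          Matrix.cons_val_two, Matrix.tail_cons, Matrix.head_fin_const, Matrix.empty_val',
          Matrix.cons_val_fin_one]
      exacts [hA₁, p13, p12, q13.symm, hA₃.symm, absurd ⟨rfl, rfl⟩ h,
        q12.symm, p23, hA₂.symm]
    · exact fun h => s23 h.symm
    · intro i j; fin_cases i <;> fin_cases j <;>
        simp only [Matrix.cons_val', Matrix.cons_val_zero, Matrix.cons_val_one, Matrix.head_cons,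
          Matrix.cons_val_two, Matrix.tail_cons, Matrix.head_fin_const, Matrix.empty_val',
          Matrix.cons_val_fin_one]
      exacts [H.loopless.irrefl u₁, r13, r12, fun h => r13 h.symm, H.loopless.irrefl v₃,
        fun h => q23 h.symm, fun h => r12 h.symm, q23, H.loopless.irrefl v₂]
    · intro i j; fin_cases i <;> fin_cases j <;>
        simp only [Matrix.cons_val', Matrix.cons_val_zero, Matrix.cons_val_one, Matrix.head_cons,
          Matrix.cons_val_two, Matrix.tail_cons, Matrix.head_fin_const, Matrix.empty_val',
          Matrix.cons_val_fin_one]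
      exacts [H.loopless.irrefl v₁, s13, s12, fun h => s13 h.symm, H.loopless.irrefl u₃,
        fun h => r23 h.symm, fun h => s12 h.symm, r23, H.loopless.irrefl u₂]
  · exact absurd p23 (htri v₁ v₂ v₃ q12 q13)

end MainCases


set_option maxHeartbeats 10000000 in
/-- In a triangle-free graph, if a matching of three edges has total edge-degree at
least `|E(H)| + 2`, then the subgraph induced by the six endpoints of the matching
is isomorphic to `K_{3,3}` or to `K_{3,3}` minus an edge, and at most one edge of
`H` has no endpoint among these six vertices. -/
theorem induced_k33_of_large_edgeDeg {V : Type*} [Fintype V] (H : SimpleGraph V)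
    (htf : H.CliqueFree 3)
    (e₁ e₂ e₃ : Sym2 V)
    (he₁ : e₁ ∈ H.edgeSet) (he₂ : e₂ ∈ H.edgeSet) (he₃ : e₃ ∈ H.edgeSet)
    (h12 : EdgesNonadj e₁ e₂) (h13 : EdgesNonadj e₁ e₃) (h23 : EdgesNonadj e₂ e₃)
    (hsum : H.edgeSet.ncard + 2 ≤ edgeDeg H e₁ + edgeDeg H e₂ + edgeDeg H e₃) :
    (Nonempty ((H.induce {v | v ∈ e₁ ∨ v ∈ e₂ ∨ v ∈ e₃}) ≃g
        completeBipartiteGraph (Fin 3) (Fin 3)) ∨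
      ∃ e ∈ (completeBipartiteGraph (Fin 3) (Fin 3)).edgeSet,
        Nonempty ((H.induce {v | v ∈ e₁ ∨ v ∈ e₂ ∨ v ∈ e₃}) ≃g
          (completeBipartiteGraph (Fin 3) (Fin 3)).deleteEdges {e})) ∧
    {f | f ∈ H.edgeSet ∧ ∀ v ∈ f, ¬(v ∈ e₁ ∨ v ∈ e₂ ∨ v ∈ e₃)}.ncard ≤ 1 := by
  classical
  induction e₁ using Sym2.ind with | _ a₁ b₁ => ?_
  induction e₂ using Sym2.ind with | _ a₂ b₂ => ?_
  induction e₃ using Sym2.ind with | _ a₃ b₃ => ?_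
  have hA1 : H.Adj a₁ b₁ := H.mem_edgeSet.mp he₁
  have hA2 : H.Adj a₂ b₂ := H.mem_edgeSet.mp he₂
  have hA3 : H.Adj a₃ b₃ := H.mem_edgeSet.mp he₃
  have htri : ∀ x y z, H.Adj x y → H.Adj x z → ¬H.Adj y z := by
    intro x y z hxy hxz hyz
    exact htf {x, y, z} (SimpleGraph.is3Clique_triple_iff.mpr ⟨hxy, hxz, hyz⟩)
  have nab1 : a₁ ≠ b₁ := hA1.ne
  have nab2 : a₂ ≠ b₂ := hA2.ne
  have nab3 : a₃ ≠ b₃ := hA3.ne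
  have h12a := h12 a₁ (by simp)
  have h12b := h12 b₁ (by simp)
  have h13a := h13 a₁ (by simp)
  have h13b := h13 b₁ (by simp)
  have h23a := h23 a₂ (by simp)
  have h23b := h23 b₂ (by simp)
  rw [Sym2.mem_iff] at h12a h12b h13a h13b h23a h23b
  push_neg at h12a h12b h13a h13b h23a h23b
  obtain ⟨na12, m12ab⟩ := h12a
  obtain ⟨m12ba, nb12⟩ := h12b
  obtain ⟨na13, m13ab⟩ := h13a
  obtain ⟨m13ba, nb13⟩ := h13b
  obtain ⟨na23, m23ab⟩ := h23a
  obtain ⟨m23ba, nb23⟩ := h23b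
  have nab1' := nab1.symm
  have nab2' := nab2.symm
  have nab3' := nab3.symm
  have na12' := na12.symm
  have na13' := na13.symm
  have na23' := na23.symm
  have nb12' := nb12.symm
  have nb13' := nb13.symm
  have nb23' := nb23.symm
  have m12ab' := m12ab.symm
  have m12ba' := m12ba.symm
  have m13ab' := m13ab.symm
  have m13ba' := m13ba.symm
  have m23ab' := m23ab.symm
  have m23ba' := m23ba.symm
  have P12 := pair_struct H htri a₁ b₁ a₂ b₂ nab1 na12 m12ab m12ba nb12 nab2 hA1 hA2
  have P13 := pair_struct H htri a₁ b₁ a₃ b₃ nab1 na13 m13ab m13ba nb13 nab3 hA1 hA3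
  have P23 := pair_struct H htri a₂ b₂ a₃ b₃ nab2 na23 m23ab m23ba nb23 nab3 hA2 hA3
  have hsum' : H.edgeSet.ncard + 2 ≤
      ({f | f ∈ H.edgeSet ∧ f ≠ s(a₁, b₁) ∧ ∃ v, v ∈ f ∧ v ∈ s(a₁, b₁)}).ncard + ({f | f ∈ H.edgeSet ∧ f ≠ s(a₂, b₂) ∧ ∃ v, v ∈ f ∧ v ∈ s(a₂, b₂)}).ncard + ({f | f ∈ H.edgeSet ∧ f ≠ s(a₃, b₃) ∧ ∃ v, v ∈ f ∧ v ∈ s(a₃, b₃)}).ncard := hsum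
  have hu1 : (({f | f ∈ H.edgeSet ∧ f ≠ s(a₁, b₁) ∧ ∃ v, v ∈ f ∧ v ∈ s(a₁, b₁)}) ∪ ({f | f ∈ H.edgeSet ∧ f ≠ s(a₂, b₂) ∧ ∃ v, v ∈ f ∧ v ∈ s(a₂, b₂)})).ncard + (({f | f ∈ H.edgeSet ∧ f ≠ s(a₁, b₁) ∧ ∃ v, v ∈ f ∧ v ∈ s(a₁, b₁)}) ∩ ({f | f ∈ H.edgeSet ∧ f ≠ s(a₂, b₂) ∧ ∃ v, v ∈ f ∧ v ∈ s(a₂, b₂)})).ncard =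
      ({f | f ∈ H.edgeSet ∧ f ≠ s(a₁, b₁) ∧ ∃ v, v ∈ f ∧ v ∈ s(a₁, b₁)}).ncard + ({f | f ∈ H.edgeSet ∧ f ≠ s(a₂, b₂) ∧ ∃ v, v ∈ f ∧ v ∈ s(a₂, b₂)}).ncard := Set.ncard_union_add_ncard_inter _ _
  have hu2 : ((({f | f ∈ H.edgeSet ∧ f ≠ s(a₁, b₁) ∧ ∃ v, v ∈ f ∧ v ∈ s(a₁, b₁)}) ∪ ({f | f ∈ H.edgeSet ∧ f ≠ s(a₂, b₂) ∧ ∃ v, v ∈ f ∧ v ∈ s(a₂, b₂)})) ∪ ({f | f ∈ H.edgeSet ∧ f ≠ s(a₃, b₃) ∧ ∃ v, v ∈ f ∧ v ∈ s(a₃, b₃)})).ncard + ((({f | f ∈ H.edgeSet ∧ f ≠ s(a₁, b₁) ∧ ∃ v, v ∈ f ∧ v ∈ s(a₁, b₁)}) ∪ ({f | f ∈ H.edgeSet ∧ f ≠ s(a₂, b₂) ∧ ∃ v, v ∈ f ∧ v ∈ s(a₂, b₂)})) ∩ ({f | f ∈ H.edgeSet ∧ f ≠ s(a₃, b₃) ∧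 ∃ v, v ∈ f ∧ v ∈ s(a₃, b₃)})).ncard =
      (({f | f ∈ H.edgeSet ∧ f ≠ s(a₁, b₁) ∧ ∃ v, v ∈ f ∧ v ∈ s(a₁, b₁)}) ∪ ({f | f ∈ H.edgeSet ∧ f ≠ s(a₂, b₂) ∧ ∃ v, v ∈ f ∧ v ∈ s(a₂, b₂)})).ncard + ({f | f ∈ H.edgeSet ∧ f ≠ s(a₃, b₃) ∧ ∃ v, v ∈ f ∧ v ∈ s(a₃, b₃)}).ncard := Set.ncard_union_add_ncard_inter _ _
  have hu3 : ((({f | f ∈ H.edgeSet ∧ f ≠ s(a₁, b₁) ∧ ∃ v, v ∈ f ∧ v ∈ s(a₁, b₁)}) ∪ ({f | f ∈ H.edgeSet ∧ f ≠ s(a₂, b₂) ∧ ∃ v, v ∈ f ∧ v ∈ s(a₂, b₂)})) ∩ ({f | f ∈ H.edgeSet ∧ f ≠ s(a₃, b₃) ∧ ∃ v, v ∈ f ∧ v ∈ s(a₃, b₃)})).ncard ≤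
      (({f | f ∈ H.edgeSet ∧ f ≠ s(a₁, b₁) ∧ ∃ v, v ∈ f ∧ v ∈ s(a₁, b₁)}) ∩ ({f | f ∈ H.edgeSet ∧ f ≠ s(a₃, b₃) ∧ ∃ v, v ∈ f ∧ v ∈ s(a₃, b₃)})).ncard + (({f | f ∈ H.edgeSet ∧ f ≠ s(a₂, b₂) ∧ ∃ v, v ∈ f ∧ v ∈ s(a₂, b₂)}) ∩ ({f | f ∈ H.edgeSet ∧ f ≠ s(a₃, b₃) ∧ ∃ v, v ∈ f ∧ v ∈ s(a₃, b₃)})).ncard := by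
    rw [Set.union_inter_distrib_right]
    exact Set.ncard_union_le _ _
  have hes1 : s(a₁, b₁) ∉ ({s(a₂, b₂), s(a₃, b₃)} : Set (Sym2 V)) := by
    simp only [Set.mem_insert_iff, Set.mem_singleton_iff, Sym2.eq_iff]
    rintro ((⟨h, -⟩ | ⟨h, -⟩) | (⟨h, -⟩ | ⟨h, -⟩))
    exacts [na12 h, m12ab h, na13 h, m13ab h]
  have hes2 : s(a₂, b₂) ∉ ({s(a₃, b₃)} : Set (Sym2 V)) := by
    simp only [Set.mem_singleton_iff, Sym2.eq_iff]
    rintro (⟨h, -⟩ | ⟨h, -⟩)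
    exacts [na23 h, m23ab h]
  have hes : ({s(a₁, b₁), s(a₂, b₂), s(a₃, b₃)} : Set (Sym2 V)).ncard = 3 := by
    rw [Set.ncard_insert_of_notMem hes1, Set.ncard_insert_of_notMem hes2,
      Set.ncard_singleton]
  have hdisjEs : Disjoint ((({f | f ∈ H.edgeSet ∧ f ≠ s(a₁, b₁) ∧ ∃ v, v ∈ f ∧ v ∈ s(a₁, b₁)}) ∪ ({f | f ∈ H.edgeSet ∧ f ≠ s(a₂, b₂) ∧ ∃ v, v ∈ f ∧ v ∈ s(a₂, b₂)})) ∪ ({f | f ∈ H.edgeSet ∧ f ≠ s(a₃, b₃) ∧ ∃ v, v ∈ f ∧ v ∈ s(a₃, b₃)})) ({s(a₁, b₁), s(a₂, b₂), s(a₃, b₃)} : Set (Sym2 V)) := by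
    rw [Set.disjoint_right]
    intro f hf
    simp only [Set.mem_insert_iff, Set.mem_singleton_iff] at hf
    rcases hf with rfl | rfl | rfl
    · rintro ((⟨-, hne, v, hv1, hv2⟩ | ⟨-, -, v, hv1, hv2⟩) | ⟨-, -, v, hv1, hv2⟩)
      exacts [hne rfl, h12 v hv1 hv2, h13 v hv1 hv2]
    · rintro ((⟨-, -, v, hv1, hv2⟩ | ⟨-, hne, v, hv1, hv2⟩) | ⟨-, -, v, hv1, hv2⟩)
      exacts [h12 v hv2 hv1, hne rfl, h23 v hv1 hv2]
    · rintro ((⟨-, -, v, hv1, hv2⟩ | ⟨-, -, v, hv1, hv2⟩) | ⟨-, hne, v, hv1, hv2⟩)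
      exacts [h13 v hv2 hv1, h23 v hv2 hv1, hne rfl]
  have hsubEs : ((({f | f ∈ H.edgeSet ∧ f ≠ s(a₁, b₁) ∧ ∃ v, v ∈ f ∧ v ∈ s(a₁, b₁)}) ∪ ({f | f ∈ H.edgeSet ∧ f ≠ s(a₂, b₂) ∧ ∃ v, v ∈ f ∧ v ∈ s(a₂, b₂)})) ∪ ({f | f ∈ H.edgeSet ∧ f ≠ s(a₃, b₃) ∧ ∃ v, v ∈ f ∧ v ∈ s(a₃, b₃)})) ∪ ({s(a₁, b₁), s(a₂, b₂), s(a₃, b₃)} : Set (Sym2 V)) ⊆ H.edgeSet := by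
    rintro f (((⟨hf, -⟩ | ⟨hf, -⟩) | ⟨hf, -⟩) | hf)
    · exact hf
    · exact hf
    · exact hf
    · simp only [Set.mem_insert_iff, Set.mem_singleton_iff] at hf
      rcases hf with rfl | rfl | rfl
      exacts [he₁, he₂, he₃]
  have hM1 : ((({f | f ∈ H.edgeSet ∧ f ≠ s(a₁, b₁) ∧ ∃ v, v ∈ f ∧ v ∈ s(a₁, b₁)}) ∪ ({f | f ∈ H.edgeSet ∧ f ≠ s(a₂, b₂) ∧ ∃ v, v ∈ f ∧ v ∈ s(a₂, b₂)})) ∪ ({f | f ∈ H.edgeSet ∧ f ≠ s(a₃, b₃) ∧ ∃ v, v ∈ f ∧ v ∈ s(a₃, b₃)})).ncard + 3 ≤ H.edgeSet.ncard := by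
    rw [← hes, ← Set.ncard_union_eq hdisjEs]
    exact Set.ncard_le_ncard hsubEs
  have hdisjT : Disjoint ({f | f ∈ H.edgeSet ∧ ∀ v ∈ f, ¬(v ∈ s(a₁, b₁) ∨ v ∈ s(a₂, b₂) ∨ v ∈ s(a₃, b₃))}) (((({f | f ∈ H.edgeSet ∧ f ≠ s(a₁, b₁) ∧ ∃ v, v ∈ f ∧ v ∈ s(a₁, b₁)}) ∪ ({f | f ∈ H.edgeSet ∧ f ≠ s(a₂, b₂) ∧ ∃ v, v ∈ f ∧ v ∈ s(a₂, b₂)})) ∪ ({f | f ∈ H.edgeSet ∧ f ≠ s(a₃, b₃) ∧ ∃ v, v ∈ f ∧ v ∈ s(a₃, b₃)})) ∪ ({s(a₁, b₁), s(a₂, b₂), s(a₃, b₃)} : Set (Sym2 V))) := by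
    rw [Set.disjoint_right]
    intro f hf
    rcases hf with ((⟨-, -, v, hv1, hv2⟩ | ⟨-, -, v, hv1, hv2⟩) | ⟨-, -, v, hv1, hv2⟩) | hf
    · rintro ⟨-, hT⟩; exact hT v hv1 (Or.inl hv2)
    · rintro ⟨-, hT⟩; exact hT v hv1 (Or.inr (Or.inl hv2))
    · rintro ⟨-, hT⟩; exact hT v hv1 (Or.inr (Or.inr hv2))
    · simp only [Set.mem_insert_iff, Set.mem_singleton_iff] at hf
      rcases hf with rfl | rfl | rfl
      · rintro ⟨-, hT⟩; exact hT a₁ (by simp) (Or.inl (by simp))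
      · rintro ⟨-, hT⟩; exact hT a₂ (by simp) (Or.inr (Or.inl (by simp)))
      · rintro ⟨-, hT⟩; exact hT a₃ (by simp) (Or.inr (Or.inr (by simp)))
  have hsubT : ({f | f ∈ H.edgeSet ∧ ∀ v ∈ f, ¬(v ∈ s(a₁, b₁) ∨ v ∈ s(a₂, b₂) ∨ v ∈ s(a₃, b₃))}) ∪ (((({f | f ∈ H.edgeSet ∧ f ≠ s(a₁, b₁) ∧ ∃ v, v ∈ f ∧ v ∈ s(a₁, b₁)}) ∪ ({f | f ∈ H.edgeSet ∧ f ≠ s(a₂, b₂) ∧ ∃ v, v ∈ f ∧ v ∈ s(a₂, b₂)})) ∪ ({f | f ∈ H.edgeSet ∧ f ≠ s(a₃, b₃) ∧ ∃ v, v ∈ f ∧ v ∈ s(a₃, b₃)})) ∪ ({s(a₁, b₁), s(a₂, b₂), s(a₃, b₃)} : Set (Sym2 V))) ⊆ H.edgeSet := by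
    rintro f (⟨hf, -⟩ | hf)
    · exact hf
    · exact hsubEs hf
  have hM2 : ({f | f ∈ H.edgeSet ∧ ∀ v ∈ f, ¬(v ∈ s(a₁, b₁) ∨ v ∈ s(a₂, b₂) ∨ v ∈ s(a₃, b₃))}).ncard + (((({f | f ∈ H.edgeSet ∧ f ≠ s(a₁, b₁) ∧ ∃ v, v ∈ f ∧ v ∈ s(a₁, b₁)}) ∪ ({f | f ∈ H.edgeSet ∧ f ≠ s(a₂, b₂) ∧ ∃ v, v ∈ f ∧ v ∈ s(a₂, b₂)})) ∪ ({f | f ∈ H.edgeSet ∧ f ≠ s(a₃, b₃) ∧ ∃ v, v ∈ f ∧ v ∈ s(a₃, b₃)})).ncard + 3) ≤ H.edgeSet.ncard := by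
    rw [← hes, ← Set.ncard_union_eq hdisjEs, ← Set.ncard_union_eq hdisjT]
    exact Set.ncard_le_ncard hsubT
  set nA1 := ({f | f ∈ H.edgeSet ∧ f ≠ s(a₁, b₁) ∧ ∃ v, v ∈ f ∧ v ∈ s(a₁, b₁)}).ncard with hdefA1
  set nA2 := ({f | f ∈ H.edgeSet ∧ f ≠ s(a₂, b₂) ∧ ∃ v, v ∈ f ∧ v ∈ s(a₂, b₂)}).ncard with hdefA2
  set nA3 := ({f | f ∈ H.edgeSet ∧ f ≠ s(a₃, b₃) ∧ ∃ v, v ∈ f ∧ v ∈ s(a₃, b₃)}).ncard with hdefA3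
  set nU12 := (({f | f ∈ H.edgeSet ∧ f ≠ s(a₁, b₁) ∧ ∃ v, v ∈ f ∧ v ∈ s(a₁, b₁)}) ∪ ({f | f ∈ H.edgeSet ∧ f ≠ s(a₂, b₂) ∧ ∃ v, v ∈ f ∧ v ∈ s(a₂, b₂)})).ncard with hdefU12
  set nU := ((({f | f ∈ H.edgeSet ∧ f ≠ s(a₁, b₁) ∧ ∃ v, v ∈ f ∧ v ∈ s(a₁, b₁)}) ∪ ({f | f ∈ H.edgeSet ∧ f ≠ s(a₂, b₂) ∧ ∃ v, v ∈ f ∧ v ∈ s(a₂, b₂)})) ∪ ({f | f ∈ H.edgeSet ∧ f ≠ s(a₃, b₃) ∧ ∃ v, v ∈ f ∧ v ∈ s(a₃, b₃)})).ncard with hdefU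
  set nX := ((({f | f ∈ H.edgeSet ∧ f ≠ s(a₁, b₁) ∧ ∃ v, v ∈ f ∧ v ∈ s(a₁, b₁)}) ∪ ({f | f ∈ H.edgeSet ∧ f ≠ s(a₂, b₂) ∧ ∃ v, v ∈ f ∧ v ∈ s(a₂, b₂)})) ∩ ({f | f ∈ H.edgeSet ∧ f ≠ s(a₃, b₃) ∧ ∃ v, v ∈ f ∧ v ∈ s(a₃, b₃)})).ncard with hdefX
  set nI12 := (({f | f ∈ H.edgeSet ∧ f ≠ s(a₁, b₁) ∧ ∃ v, v ∈ f ∧ v ∈ s(a₁, b₁)}) ∩ ({f | f ∈ H.edgeSet ∧ f ≠ s(a₂, b₂) ∧ ∃ v, v ∈ f ∧ v ∈ s(a₂, b₂)})).ncard with hdefI12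
  set nI13 := (({f | f ∈ H.edgeSet ∧ f ≠ s(a₁, b₁) ∧ ∃ v, v ∈ f ∧ v ∈ s(a₁, b₁)}) ∩ ({f | f ∈ H.edgeSet ∧ f ≠ s(a₃, b₃) ∧ ∃ v, v ∈ f ∧ v ∈ s(a₃, b₃)})).ncard with hdefI13
  set nI23 := (({f | f ∈ H.edgeSet ∧ f ≠ s(a₂, b₂) ∧ ∃ v, v ∈ f ∧ v ∈ s(a₂, b₂)}) ∩ ({f | f ∈ H.edgeSet ∧ f ≠ s(a₃, b₃) ∧ ∃ v, v ∈ f ∧ v ∈ s(a₃, b₃)})).ncard with hdefI23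
  set nT := ({f | f ∈ H.edgeSet ∧ ∀ v ∈ f, ¬(v ∈ s(a₁, b₁) ∨ v ∈ s(a₂, b₂) ∨ v ∈ s(a₃, b₃))}).ncard with hdefT
  set m := H.edgeSet.ncard with hdefm
  have hb12 := P12.1
  have hb13 := P13.1
  have hb23 := P23.1
  have hTle : nT ≤ 1 := by omega
  have hcases : (nI12 = 2 ∧ nI13 = 2 ∧ nI23 = 2) ∨
      (nI12 = 2 ∧ nI13 = 2 ∧ nI23 = 1) ∨
      (nI12 = 2 ∧ nI23 = 2 ∧ nI13 = 1) ∨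
      (nI13 = 2 ∧ nI23 = 2 ∧ nI12 = 1) := by omega
  have hSet : {v | v ∈ s(a₁, b₁) ∨ v ∈ s(a₂, b₂) ∨ v ∈ s(a₃, b₃)} =
      ({a₁, b₁, a₂, b₂, a₃, b₃} : Set V) := by
    ext w
    simp only [Set.mem_setOf_eq, Sym2.mem_iff, Set.mem_insert_iff, Set.mem_singleton_iff,
      or_assoc]
  refine ⟨?_, hTle⟩
  rcases hcases with ⟨hc12, hc13, hc23⟩ | ⟨hc12, hc13, hc23⟩ |
    ⟨hc12, hc23, hc13⟩ | ⟨hc13, hc23, hc12⟩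
  · left
    have d12 := P12.2.1 hc12
    have d13 := P13.2.1 hc13
    have d23 := P23.2.1 hc23
    rcases d12 with h12' | h12' <;> rcases d13 with h13' | h13'
    · refine caseA htri a₁ b₂ b₃ b₁ a₂ a₃ ?_ hA1 hA2.symm hA3.symm h12' h13' ((d23.imp MP.swap MP.swap).symm)
      rw [hSet]
      all_goals ext w
      all_goals simp only [Set.mem_insert_iff, Set.mem_singleton_iff]
      all_goals constructor <;> (rintro (rfl | rfl | rfl | rfl | rfl | rfl) <;> simp)
    · refine caseA htri a₁ b₂ a₃ b₁ a₂ b₃ ?_ hA1 hA2.symm hA3 h12' h13' (d23.imp MP.swap MP.swap)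
      rw [hSet]
      all_goals ext w
      all_goals simp only [Set.mem_insert_iff, Set.mem_singleton_iff]
      all_goals constructor <;> (rintro (rfl | rfl | rfl | rfl | rfl | rfl) <;> simp)
    · refine caseA htri a₁ a₂ b₃ b₁ b₂ a₃ ?_ hA1 hA2 hA3.symm h12' h13' d23
      rw [hSet]
      all_goals ext w
      all_goals simp only [Set.mem_insert_iff, Set.mem_singleton_iff]
      all_goals constructor <;> (rintro (rfl | rfl | rfl | rfl | rfl | rfl) <;> simp)
    · refine caseA htri a₁ a₂ a₃ b₁ b₂ b₃ ?_ hA1 hA2 hA3 h12' h13' d23.symm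
      rw [hSet]
      all_goals ext w
      all_goals simp only [Set.mem_insert_iff, Set.mem_singleton_iff]
      all_goals constructor <;> (rintro (rfl | rfl | rfl | rfl | rfl | rfl) <;> simp)
  · right
    have d12 := P12.2.1 hc12
    have d13 := P13.2.1 hc13
    have d23 := P23.2.2 hc23
    rcases d12 with h12' | h12' <;> rcases d13 with h13' | h13'
    · refine caseB htri a₁ a₂ a₃ b₁ b₂ b₃ ?_ hA1 hA2 hA3 h12' h13' d23
      rw [hSet]
      all_goals ext w
      all_goals simp only [Set.mem_insert_iff, Set.mem_singleton_iff]
      all_goals constructor <;> (rintro (rfl | rfl | rfl | rfl | rfl | rfl) <;> simp)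
    · refine caseB htri a₁ a₂ b₃ b₁ b₂ a₃ ?_ hA1 hA2 hA3.symm h12' h13' (or4a d23)
      rw [hSet]
      all_goals ext w
      all_goals simp only [Set.mem_insert_iff, Set.mem_singleton_iff]
      all_goals constructor <;> (rintro (rfl | rfl | rfl | rfl | rfl | rfl) <;> simp)
    · refine caseB htri a₁ b₂ a₃ b₁ a₂ b₃ ?_ hA1 hA2.symm hA3 h12' h13' (or4b d23)
      rw [hSet]
      all_goals ext w
      all_goals simp only [Set.mem_insert_iff, Set.mem_singleton_iff]
      all_goals constructor <;> (rintro (rfl | rfl | rfl | rfl | rfl | rfl) <;> simp)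
    · refine caseB htri a₁ b₂ b₃ b₁ a₂ a₃ ?_ hA1 hA2.symm hA3.symm h12' h13' (or4c d23)
      rw [hSet]
      all_goals ext w
      all_goals simp only [Set.mem_insert_iff, Set.mem_singleton_iff]
      all_goals constructor <;> (rintro (rfl | rfl | rfl | rfl | rfl | rfl) <;> simp)
  · right
    have d12 := P12.2.1 hc12
    have d23 := P23.2.1 hc23
    have d13 := P13.2.2 hc13
    rcases d12 with h12' | h12' <;> rcases d23 with h23' | h23'
    · refine caseB htri a₂ a₁ a₃ b₂ b₁ b₃ ?_ hA2 hA1 hA3 h12'.flip h23' d13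
      rw [hSet]
      all_goals ext w
      all_goals simp only [Set.mem_insert_iff, Set.mem_singleton_iff]
      all_goals constructor <;> (rintro (rfl | rfl | rfl | rfl | rfl | rfl) <;> simp)
    · refine caseB htri a₂ a₁ b₃ b₂ b₁ a₃ ?_ hA2 hA1 hA3.symm h12'.flip h23' (or4a d13)
      rw [hSet]
      all_goals ext w
      all_goals simp only [Set.mem_insert_iff, Set.mem_singleton_iff]
      all_goals constructor <;> (rintro (rfl | rfl | rfl | rfl | rfl | rfl) <;> simp)
    · refine caseB htri a₂ b₁ a₃ b₂ a₁ b₃ ?_ hA2 hA1.symm hA3 h12'.flip.swap h23' (or4b d13)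
      rw [hSet]
      all_goals ext w
      all_goals simp only [Set.mem_insert_iff, Set.mem_singleton_iff]
      all_goals constructor <;> (rintro (rfl | rfl | rfl | rfl | rfl | rfl) <;> simp)
    · refine caseB htri a₂ b₁ b₃ b₂ a₁ a₃ ?_ hA2 hA1.symm hA3.symm h12'.flip.swap h23' (or4c d13)
      rw [hSet]
      all_goals ext w
      all_goals simp only [Set.mem_insert_iff, Set.mem_singleton_iff]
      all_goals constructor <;> (rintro (rfl | rfl | rfl | rfl | rfl | rfl) <;> simp)
  · right
    have d13 := P13.2.1 hc13
    have d23 := P23.2.1 hc23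
    have d12 := P12.2.2 hc12
    rcases d13 with h13' | h13' <;> rcases d23 with h23' | h23'
    · refine caseB htri a₃ a₁ a₂ b₃ b₁ b₂ ?_ hA3 hA1 hA2 h13'.flip h23'.flip d12
      rw [hSet]
      all_goals ext w
      all_goals simp only [Set.mem_insert_iff, Set.mem_singleton_iff]
      all_goals constructor <;> (rintro (rfl | rfl | rfl | rfl | rfl | rfl) <;> simp)
    · refine caseB htri a₃ a₁ b₂ b₃ b₁ a₂ ?_ hA3 hA1 hA2.symm h13'.flip h23'.flip.swap (or4a d12)
      rw [hSet]
      all_goals ext w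
      all_goals simp only [Set.mem_insert_iff, Set.mem_singleton_iff]
      all_goals constructor <;> (rintro (rfl | rfl | rfl | rfl | rfl | rfl) <;> simp)
    · refine caseB htri a₃ b₁ a₂ b₃ a₁ b₂ ?_ hA3 hA1.symm hA2 h13'.flip.swap h23'.flip (or4b d12)
      rw [hSet]
      all_goals ext w
      all_goals simp only [Set.mem_insert_iff, Set.mem_singleton_iff]
      all_goals constructor <;> (rintro (rfl | rfl | rfl | rfl | rfl | rfl) <;> simp)
    · refine caseB htri a₃ b₁ b₂ b₃ a₁ a₂ ?_ hA3 hA1.symm hA2.symm h13'.flip.swap h23'.flip.swap (or4c d12)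
      rw [hSet]
      all_goals ext w
      all_goals simp only [Set.mem_insert_iff, Set.mem_singleton_iff]
      all_goals constructor <;> (rintro (rfl | rfl | rfl | rfl | rfl | rfl) <;> simp)
end

section
/- Let H be a triangle-free simple graph. If H contains a heavy matching of size 4, that is, four pairwise nonadjacent edges e1, e2, e3, e4 with ed(e_i) ≥ (|E(H)| - 2)/3 for each i, then |E(H)| ≤ 32. -/
set_option maxHeartbeats 1600000
open SimpleGraph

open scoped Classical

lemma tri_free_aux {V : Type*} {H : SimpleGraph V} (htf : H.CliqueFree 3) {x y z : V}
    (h1 : H.Adj x y) (h2 : H.Adj x z) (h3 : H.Adj y z) : False := by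
  classical
  exact htf {x, y, z} (SimpleGraph.is3Clique_triple_iff.mpr ⟨h1, h2, h3⟩)

lemma nonadj_ne {V : Type*} {e e' : Sym2 V} (h : EdgesNonadj e e') : e ≠ e' := by
  induction e using Sym2.ind with
  | _ x y =>
    rintro rfl
    exact h x (Sym2.mem_mk_left x y) (Sym2.mem_mk_left x y)

lemma no_three {V : Type*} {e₁ e₂ e₃ : Sym2 V} (h12 : EdgesNonadj e₁ e₂)
    (h13 : EdgesNonadj e₁ e₃) (h23 : EdgesNonadj e₂ e₃) (f : Sym2 V)
    (q1 : ∃ v, v ∈ f ∧ v ∈ e₁) (q2 : ∃ v, v ∈ f ∧ v ∈ e₂)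
    (q3 : ∃ v, v ∈ f ∧ v ∈ e₃) : False := by
  induction f using Sym2.ind with
  | _ x y =>
    obtain ⟨u, hu, hu1⟩ := q1
    obtain ⟨v, hv, hv1⟩ := q2
    obtain ⟨w, hw, hw1⟩ := q3
    rw [Sym2.mem_iff] at hu hv hw
    rcases hu with rfl | rfl <;> rcases hv with hv | hv <;> rcases hw with hw | hw <;>
      first
        | exact h12 _ hu1 (hv ▸ hv1)
        | exact h13 _ hu1 (hw ▸ hw1)
        | exact h23 _ (hv ▸ hv1) (hw ▸ hw1)

lemma pair_le_one {V : Type*} {H : SimpleGraph V} (htf : H.CliqueFree 3)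
    {p q z : V} (hpq : H.Adj p q)
    {S : Finset (Sym2 V)} (hS : ∀ f ∈ S, f ∈ H.edgeSet) :
    (S ∩ {s(z, p), s(z, q)}).card ≤ 1 := by
  rw [Finset.card_le_one]
  intro u hu v hv
  simp only [Finset.mem_inter, Finset.mem_insert, Finset.mem_singleton] at hu hv
  have hadj : ∀ w ∈ S, w = s(z, p) → H.Adj z p := fun w hw hwe => by
    have := hS w hw; rw [hwe, H.mem_edgeSet] at this; exact this
  have hadj' : ∀ w ∈ S, w = s(z, q) → H.Adj z q := fun w hw hwe => by
    have := hS w hw; rw [hwe, H.mem_edgeSet] at this; exact this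
  rcases hu.2 with h1 | h1 <;> rcases hv.2 with h2 | h2
  · rw [h1, h2]
  · exact (tri_free_aux htf (hadj u hu.1 h1) (hadj' v hv.1 h2) hpq).elim
  · exact (tri_free_aux htf (hadj v hv.1 h2) (hadj' u hu.1 h1) hpq).elim
  · rw [h1, h2]

lemma between_bound {V : Type*} {H : SimpleGraph V} (htf : H.CliqueFree 3)
    (e e' : Sym2 V) (he' : e' ∈ H.edgeSet) (hd : EdgesNonadj e e')
    (S : Finset (Sym2 V))
    (hSmem : ∀ f ∈ S, f ∈ H.edgeSet ∧ (∃ v, v ∈ f ∧ v ∈ e) ∧ (∃ v, v ∈ f ∧ v ∈ e')) :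
    S.card ≤ 2 := by
  induction e using Sym2.ind with
  | _ a b =>
    induction e' using Sym2.ind with
    | _ c d =>
      rw [H.mem_edgeSet] at he'
      have hS : ∀ f ∈ S, f ∈ H.edgeSet := fun f hf => (hSmem f hf).1
      have hsub : S ⊆ ({s(a, c), s(a, d)} ∪ {s(b, c), s(b, d)} : Finset (Sym2 V)) := by
        intro f hf
        induction f using Sym2.ind with
        | _ x y =>
          obtain ⟨hfE, ⟨u, hu, hu1⟩, ⟨v, hv, hv1⟩⟩ := hSmem _ hf
          have huv : u ≠ v := fun h => hd u hu1 (h ▸ hv1)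
          have hf' : s(x, y) = s(u, v) := by
            rw [Sym2.mem_iff] at hu hv
            rcases hu with rfl | rfl <;> rcases hv with rfl | rfl
            · exact absurd rfl huv
            · rfl
            · exact Sym2.eq_swap
            · exact absurd rfl huv
          rw [Sym2.mem_iff] at hu1 hv1
          simp only [Finset.mem_union, Finset.mem_insert, Finset.mem_singleton]
          rcases hu1 with rfl | rfl <;> rcases hv1 with rfl | rfl <;> simp [hf']
      calc S.card = ((S ∩ {s(a, c), s(a, d)}) ∪ (S ∩ {s(b, c), s(b, d)})).card := by
            rw [← Finset.inter_union_distrib_left,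
              Finset.inter_eq_left.mpr hsub]
        _ ≤ (S ∩ {s(a, c), s(a, d)}).card + (S ∩ {s(b, c), s(b, d)}).card :=
            Finset.card_union_le _ _
        _ ≤ 2 := by
            have h1 := pair_le_one htf he' hS (z := a)
            have h2 := pair_le_one htf he' hS (z := b)
            omega


lemma sum_ind_le {α : Type*} (s t : Finset α) (g : α → ℕ) (hg : ∀ f, g f ≤ 1)
    (hg0 : ∀ f ∉ t, g f = 0) : ∑ f ∈ s, g f ≤ t.card := by
  classical
  calc ∑ f ∈ s, g f
      = ∑ f ∈ s.filter (· ∈ t), g f + ∑ f ∈ s.filter (fun f => ¬ f ∈ t), g f :=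
        (Finset.sum_filter_add_sum_filter_not s _ g).symm
    _ ≤ (s.filter (· ∈ t)).card * 1 + 0 := by
        gcongr
        · exact Finset.sum_le_card_nsmul _ _ 1 (fun x _ => hg x)
        · exact le_of_eq (Finset.sum_eq_zero fun f hf => hg0 f (Finset.mem_filter.mp hf).2)
    _ ≤ t.card := by
        have : s.filter (· ∈ t) ⊆ t := fun f hf => (Finset.mem_filter.mp hf).2
        have := Finset.card_le_card this
        omega


lemma four_ind_le_two (P1 P2 P3 P4 : Prop) [Decidable P1] [Decidable P2] [Decidable P3]
    [Decidable P4] (h123 : ¬(P1 ∧ P2 ∧ P3)) (h124 : ¬(P1 ∧ P2 ∧ P4))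
    (h134 : ¬(P1 ∧ P3 ∧ P4)) (h234 : ¬(P2 ∧ P3 ∧ P4)) :
    (if P1 then 1 else 0) + (if P2 then 1 else 0) + (if P3 then 1 else 0) +
      (if P4 then 1 else 0) ≤ 2 := by
  by_cases h1 : P1 <;> by_cases h2 : P2 <;> by_cases h3 : P3 <;> by_cases h4 : P4 <;>
    simp_all

lemma four_ind_le_one (P1 P2 P3 P4 : Prop) [Decidable P1] [Decidable P2] [Decidable P3]
    [Decidable P4] (h12 : ¬(P1 ∧ P2)) (h13 : ¬(P1 ∧ P3)) (h14 : ¬(P1 ∧ P4))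
    (h23 : ¬(P2 ∧ P3)) (h24 : ¬(P2 ∧ P4)) (h34 : ¬(P3 ∧ P4)) :
    (if P1 then 1 else 0) + (if P2 then 1 else 0) + (if P3 then 1 else 0) +
      (if P4 then 1 else 0) ≤ 1 := by
  by_cases h1 : P1 <;> by_cases h2 : P2 <;> by_cases h3 : P3 <;> by_cases h4 : P4 <;>
    simp_all

/-- A triangle-free graph containing a heavy matching of size `4` (four pairwise
nonadjacent edges of edge-degree at least `(|E(H)| - 2)/3`) has at most `32` edges. -/
theorem edge_bound_of_heavy_matching {V : Type*} [Fintype V] (H : SimpleGraph V)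
    (htf : H.CliqueFree 3)
    (e₁ e₂ e₃ e₄ : Sym2 V)
    (he₁ : e₁ ∈ H.edgeSet) (he₂ : e₂ ∈ H.edgeSet)
    (he₃ : e₃ ∈ H.edgeSet) (he₄ : e₄ ∈ H.edgeSet)
    (h12 : EdgesNonadj e₁ e₂) (h13 : EdgesNonadj e₁ e₃) (h14 : EdgesNonadj e₁ e₄)
    (h23 : EdgesNonadj e₂ e₃) (h24 : EdgesNonadj e₂ e₄) (h34 : EdgesNonadj e₃ e₄)
    (hheavy₁ : ((H.edgeSet.ncard : ℝ) - 2) / 3 ≤ edgeDeg H e₁)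
    (hheavy₂ : ((H.edgeSet.ncard : ℝ) - 2) / 3 ≤ edgeDeg H e₂)
    (hheavy₃ : ((H.edgeSet.ncard : ℝ) - 2) / 3 ≤ edgeDeg H e₃)
    (hheavy₄ : ((H.edgeSet.ncard : ℝ) - 2) / 3 ≤ edgeDeg H e₄) :
    H.edgeSet.ncard ≤ 32 := by
  have hfin : H.edgeSet.Finite := Set.toFinite _
  set E' : Finset (Sym2 V) := hfin.toFinset with hE'def
  have hmem : ∀ f, f ∈ E' ↔ f ∈ H.edgeSet := fun f => hfin.mem_toFinset
  have hcard : H.edgeSet.ncard = E'.card := Set.ncard_eq_toFinset_card _ hfin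
  have hE'mem : ∀ f ∈ E', f ∈ H.edgeSet := fun f hf => (hmem f).mp hf
  -- degree as a filter card
  have hdeg : ∀ e : Sym2 V,
      edgeDeg H e = (E'.filter (fun f => f ≠ e ∧ ∃ v, v ∈ f ∧ v ∈ e)).card := by
    intro e
    rw [edgeDeg, ← Set.ncard_coe_finset]
    congr 1
    ext f
    simp only [Set.mem_setOf_eq, Finset.coe_filter, hmem f]
    try tauto
  set T : Finset (Sym2 V) := {e₁, e₂, e₃, e₄} with hTdef
  have hT : T ⊆ E' := by
    intro f hf
    rw [hTdef] at hf
    simp only [Finset.mem_insert, Finset.mem_singleton] at hf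
    rcases hf with rfl | rfl | rfl | rfl
    exacts [(hmem _).mpr he₁, (hmem _).mpr he₂, (hmem _).mpr he₃, (hmem _).mpr he₄]
  have hTcard : T.card = 4 := by
    have n12 := nonadj_ne h12
    have n13 := nonadj_ne h13
    have n14 := nonadj_ne h14
    have n23 := nonadj_ne h23
    have n24 := nonadj_ne h24
    have n34 := nonadj_ne h34
    rw [hTdef]
    rw [Finset.card_insert_of_notMem (by simp [n12, n13, n14]),
      Finset.card_insert_of_notMem (by simp [n23, n24]),
      Finset.card_insert_of_notMem (by simp [n34]), Finset.card_singleton]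
  -- the doubly-counted edges
  set F12 := E'.filter (fun f => (∃ v, v ∈ f ∧ v ∈ e₁) ∧ (∃ v, v ∈ f ∧ v ∈ e₂)) with hF12
  set F13 := E'.filter (fun f => (∃ v, v ∈ f ∧ v ∈ e₁) ∧ (∃ v, v ∈ f ∧ v ∈ e₃)) with hF13
  set F14 := E'.filter (fun f => (∃ v, v ∈ f ∧ v ∈ e₁) ∧ (∃ v, v ∈ f ∧ v ∈ e₄)) with hF14
  set F23 := E'.filter (fun f => (∃ v, v ∈ f ∧ v ∈ e₂) ∧ (∃ v, v ∈ f ∧ v ∈ e₃)) with hF23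
  set F24 := E'.filter (fun f => (∃ v, v ∈ f ∧ v ∈ e₂) ∧ (∃ v, v ∈ f ∧ v ∈ e₄)) with hF24
  set F34 := E'.filter (fun f => (∃ v, v ∈ f ∧ v ∈ e₃) ∧ (∃ v, v ∈ f ∧ v ∈ e₄)) with hF34
  set D : Finset (Sym2 V) := F12 ∪ F13 ∪ F14 ∪ F23 ∪ F24 ∪ F34 with hDdef
  have hDcard : D.card ≤ 12 := by
    have b12 : F12.card ≤ 2 := between_bound htf e₁ e₂ he₂ h12 _
      (fun f hf => by
        rw [hF12, Finset.mem_filter] at hf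
        exact ⟨hE'mem f hf.1, hf.2.1, hf.2.2⟩)
    have b13 : F13.card ≤ 2 := between_bound htf e₁ e₃ he₃ h13 _
      (fun f hf => by
        rw [hF13, Finset.mem_filter] at hf
        exact ⟨hE'mem f hf.1, hf.2.1, hf.2.2⟩)
    have b14 : F14.card ≤ 2 := between_bound htf e₁ e₄ he₄ h14 _
      (fun f hf => by
        rw [hF14, Finset.mem_filter] at hf
        exact ⟨hE'mem f hf.1, hf.2.1, hf.2.2⟩)
    have b23 : F23.card ≤ 2 := between_bound htf e₂ e₃ he₃ h23 _
      (fun f hf => by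
        rw [hF23, Finset.mem_filter] at hf
        exact ⟨hE'mem f hf.1, hf.2.1, hf.2.2⟩)
    have b24 : F24.card ≤ 2 := between_bound htf e₂ e₄ he₄ h24 _
      (fun f hf => by
        rw [hF24, Finset.mem_filter] at hf
        exact ⟨hE'mem f hf.1, hf.2.1, hf.2.2⟩)
    have b34 : F34.card ≤ 2 := between_bound htf e₃ e₄ he₄ h34 _
      (fun f hf => by
        rw [hF34, Finset.mem_filter] at hf
        exact ⟨hE'mem f hf.1, hf.2.1, hf.2.2⟩)
    have c1 := Finset.card_union_le F12 F13
    have c2 := Finset.card_union_le (F12 ∪ F13) F14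
    have c3 := Finset.card_union_le (F12 ∪ F13 ∪ F14) F23
    have c4 := Finset.card_union_le (F12 ∪ F13 ∪ F14 ∪ F23) F24
    have c5 := Finset.card_union_le (F12 ∪ F13 ∪ F14 ∪ F23 ∪ F24) F34
    rw [hDdef]
    omega
  have A : ∀ {e e' : Sym2 V}, EdgesNonadj e e' → ¬∃ v, v ∈ e ∧ v ∈ e' :=
    fun h ⟨v, a, b⟩ => h v a b
  have B : ∀ {e e' : Sym2 V}, EdgesNonadj e e' → ¬∃ v, v ∈ e' ∧ v ∈ e :=
    fun h ⟨v, a, b⟩ => h v b a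
  -- pointwise bound
  have hpt : ∀ f ∈ E',
      ((if f ≠ e₁ ∧ ∃ v, v ∈ f ∧ v ∈ e₁ then 1 else 0) +
       (if f ≠ e₂ ∧ ∃ v, v ∈ f ∧ v ∈ e₂ then 1 else 0) +
       (if f ≠ e₃ ∧ ∃ v, v ∈ f ∧ v ∈ e₃ then 1 else 0) +
       (if f ≠ e₄ ∧ ∃ v, v ∈ f ∧ v ∈ e₄ then 1 else 0) : ℕ) ≤
      (if f ∈ T then 0 else 1 + (if f ∈ D then 1 else 0)) := by
    intro f hf
    by_cases hfT : f ∈ T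
    · have hfT' := hfT
      rw [hTdef] at hfT'
      simp only [Finset.mem_insert, Finset.mem_singleton] at hfT'
      rcases hfT' with rfl | rfl | rfl | rfl <;>
        simp [hfT, A h12, A h13, A h14, A h23, A h24, A h34,
          B h12, B h13, B h14, B h23, B h24, B h34]
    · have hfT' := hfT
      rw [hTdef] at hfT'
      simp only [Finset.mem_insert, Finset.mem_singleton, not_or] at hfT'
      obtain ⟨hn1, hn2, hn3, hn4⟩ := hfT'
      simp only [hn1, hn2, hn3, hn4, ne_eq, not_false_eq_true, true_and, if_neg hfT]
      by_cases hfD : f ∈ D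
      · simp only [hfD, if_true]
        have ht123 : ¬((∃ v, v ∈ f ∧ v ∈ e₁) ∧ (∃ v, v ∈ f ∧ v ∈ e₂) ∧
            (∃ v, v ∈ f ∧ v ∈ e₃)) := fun ⟨a, b, c⟩ => no_three h12 h13 h23 f a b c
        have ht124 : ¬((∃ v, v ∈ f ∧ v ∈ e₁) ∧ (∃ v, v ∈ f ∧ v ∈ e₂) ∧
            (∃ v, v ∈ f ∧ v ∈ e₄)) := fun ⟨a, b, c⟩ => no_three h12 h14 h24 f a b c
        have ht134 : ¬((∃ v, v ∈ f ∧ v ∈ e₁) ∧ (∃ v, v ∈ f ∧ v ∈ e₃) ∧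
            (∃ v, v ∈ f ∧ v ∈ e₄)) := fun ⟨a, b, c⟩ => no_three h13 h14 h34 f a b c
        have ht234 : ¬((∃ v, v ∈ f ∧ v ∈ e₂) ∧ (∃ v, v ∈ f ∧ v ∈ e₃) ∧
            (∃ v, v ∈ f ∧ v ∈ e₄)) := fun ⟨a, b, c⟩ => no_three h23 h24 h34 f a b c
        have := four_ind_le_two (∃ v, v ∈ f ∧ v ∈ e₁) (∃ v, v ∈ f ∧ v ∈ e₂)
          (∃ v, v ∈ f ∧ v ∈ e₃) (∃ v, v ∈ f ∧ v ∈ e₄)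
          (fun ⟨a, b, c⟩ => ht123 ⟨a, b, c⟩) (fun ⟨a, b, c⟩ => ht124 ⟨a, b, c⟩)
          (fun ⟨a, b, c⟩ => ht134 ⟨a, b, c⟩) (fun ⟨a, b, c⟩ => ht234 ⟨a, b, c⟩)
        linarith
      · have hnF : f ∉ F12 ∧ f ∉ F13 ∧ f ∉ F14 ∧ f ∉ F23 ∧ f ∉ F24 ∧ f ∉ F34 := by
          rw [hDdef] at hfD
          simp only [Finset.mem_union, not_or] at hfD
          tauto
        obtain ⟨m12, m13, m14, m23, m24, m34⟩ := hnF
        have hp12 : ¬((∃ v, v ∈ f ∧ v ∈ e₁) ∧ (∃ v, v ∈ f ∧ v ∈ e₂)) := fun qq =>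
          m12 (by rw [hF12, Finset.mem_filter]; exact ⟨hf, qq⟩)
        have hp13 : ¬((∃ v, v ∈ f ∧ v ∈ e₁) ∧ (∃ v, v ∈ f ∧ v ∈ e₃)) := fun qq =>
          m13 (by rw [hF13, Finset.mem_filter]; exact ⟨hf, qq⟩)
        have hp14 : ¬((∃ v, v ∈ f ∧ v ∈ e₁) ∧ (∃ v, v ∈ f ∧ v ∈ e₄)) := fun qq =>
          m14 (by rw [hF14, Finset.mem_filter]; exact ⟨hf, qq⟩)
        have hp23 : ¬((∃ v, v ∈ f ∧ v ∈ e₂) ∧ (∃ v, v ∈ f ∧ v ∈ e₃)) := fun qq =>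
          m23 (by rw [hF23, Finset.mem_filter]; exact ⟨hf, qq⟩)
        have hp24 : ¬((∃ v, v ∈ f ∧ v ∈ e₂) ∧ (∃ v, v ∈ f ∧ v ∈ e₄)) := fun qq =>
          m24 (by rw [hF24, Finset.mem_filter]; exact ⟨hf, qq⟩)
        have hp34 : ¬((∃ v, v ∈ f ∧ v ∈ e₃) ∧ (∃ v, v ∈ f ∧ v ∈ e₄)) := fun qq =>
          m34 (by rw [hF34, Finset.mem_filter]; exact ⟨hf, qq⟩)
        have hD0 : (if f ∈ D then (1:ℕ) else 0) = 0 := if_neg hfD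
        rw [hD0]
        have := four_ind_le_one (∃ v, v ∈ f ∧ v ∈ e₁) (∃ v, v ∈ f ∧ v ∈ e₂)
          (∃ v, v ∈ f ∧ v ∈ e₃) (∃ v, v ∈ f ∧ v ∈ e₄) hp12 hp13 hp14 hp23 hp24 hp34
        linarith
  -- summing up
  have hL : edgeDeg H e₁ + edgeDeg H e₂ + edgeDeg H e₃ + edgeDeg H e₄ ≤
      (E'.card - 4) + 12 := by
    calc edgeDeg H e₁ + edgeDeg H e₂ + edgeDeg H e₃ + edgeDeg H e₄
        = ∑ f ∈ E', ((if f ≠ e₁ ∧ ∃ v, v ∈ f ∧ v ∈ e₁ then 1 else 0) +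
            (if f ≠ e₂ ∧ ∃ v, v ∈ f ∧ v ∈ e₂ then 1 else 0) +
            (if f ≠ e₃ ∧ ∃ v, v ∈ f ∧ v ∈ e₃ then 1 else 0) +
            (if f ≠ e₄ ∧ ∃ v, v ∈ f ∧ v ∈ e₄ then 1 else 0)) := by
          rw [hdeg e₁, hdeg e₂, hdeg e₃, hdeg e₄, Finset.card_filter, Finset.card_filter,
            Finset.card_filter, Finset.card_filter, ← Finset.sum_add_distrib,
            ← Finset.sum_add_distrib, ← Finset.sum_add_distrib]
      _ ≤ ∑ f ∈ E', (if f ∈ T then 0 else 1 + (if f ∈ D then 1 else 0)) :=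
          Finset.sum_le_sum hpt
      _ ≤ (E'.card - 4) + 12 := by
          rw [← Finset.sum_sdiff hT]
          have hTzero : ∑ f ∈ T, (if f ∈ T then (0:ℕ) else 1 + (if f ∈ D then 1 else 0)) = 0 :=
            Finset.sum_eq_zero fun f hf => by simp [hf]
          rw [hTzero, add_zero]
          have hEq : ∀ f ∈ E' \ T,
              (if f ∈ T then (0:ℕ) else 1 + (if f ∈ D then 1 else 0)) =
              1 + (if f ∈ D then 1 else 0) := fun f hf => by
            rw [if_neg (Finset.mem_sdiff.mp hf).2]
          rw [Finset.sum_congr rfl hEq, Finset.sum_add_distrib, Finset.sum_const,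
            smul_eq_mul, mul_one, Finset.card_sdiff_of_subset hT, hTcard]
          have hind : ∑ f ∈ E' \ T, (if f ∈ D then (1:ℕ) else 0) ≤ D.card :=
            sum_ind_le _ _ _ (fun f => by by_cases h : f ∈ D <;> simp [h])
              (fun f hf => if_neg hf)
          omega
  have hm4 : 4 ≤ E'.card := hTcard ▸ Finset.card_le_card hT
  have hfinal : edgeDeg H e₁ + edgeDeg H e₂ + edgeDeg H e₃ + edgeDeg H e₄ ≤ E'.card + 8 := by
    omega
  rw [hcard] at hheavy₁ hheavy₂ hheavy₃ hheavy₄ ⊢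
  have hcast : ((edgeDeg H e₁ + edgeDeg H e₂ + edgeDeg H e₃ + edgeDeg H e₄ : ℕ) : ℝ) ≤
      ((E'.card + 8 : ℕ) : ℝ) := Nat.cast_le.mpr hfinal
  push_cast at hcast
  have hreal : (E'.card : ℝ) ≤ 32 := by linarith
  exact_mod_cast hreal
end
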